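/- arXiv:1902.06507 — 5 statements merged into one kernel-verified Lean document; each statement's English description precedes it below -/
import Mathlib

section
/- Let K be a field, E a finite set, and W ⊆ K^E any configuration. Then the radical of the Jacobian ideal J_W equals the radical of the ideal M_W of submaximal minors of the configuration form Q_W; in particular, the minimal primes of K[x_e : e ∈ E] over J_W and over M_W coincide. -/
open scoped BigOperators

set_option linter.unusedSectionVars false

namespace Config

variable {K : Type} [Field K] {E : Type} [Fintype E] [DecidableEq E]

/-- `w` is a (linear) basis of the configuration `W ⊆ K^E`. -/
def IsBasisOf {r : ℕ} (w : Fin r → E → K) (W : Submodule K (E → K)) : Prop :=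
  LinearIndependent K w ∧ Submodule.span K (Set.range w) = W

/-- The configuration (bilinear) form `Q_W` computed from the basis `w`: the symmetric
`r × r` matrix with entries `∑_{e ∈ E} x_e · w^i_e · w^j_e` over `K[x_e : e ∈ E]`. -/
noncomputable def Qform {r : ℕ} (w : Fin r → E → K) :
    Matrix (Fin r) (Fin r) (MvPolynomial E K) :=
  Matrix.of fun i j => ∑ e : E, MvPolynomial.C (w i e * w j e) * MvPolynomial.X e

/-- The configuration polynomial `ψ_W = det Q_W` computed from the basis `w`. -/
noncomputable def psi {r : ℕ} (w : Fin r → E → K) : MvPolynomial E K :=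
  (Qform w).det

/-- The ideal `M_W` generated by the submaximal, i.e. `(r−1) × (r−1)`, minors of the
configuration form `Q_W`. -/
noncomputable def minorIdeal {r : ℕ} (w : Fin r → E → K) : Ideal (MvPolynomial E K) :=
  Ideal.span {p | ∃ f g : Fin (r - 1) ↪ Fin r, p = Matrix.det ((Qform w).submatrix f g)}

/-- The Jacobian ideal `J_W = ⟨ψ_W⟩ + ⟨∂ψ_W/∂x_e : e ∈ E⟩`. -/
noncomputable def jacIdeal {r : ℕ} (w : Fin r → E → K) : Ideal (MvPolynomial E K) :=
  Ideal.span ({psi w} ∪ Set.range fun e => MvPolynomial.pderiv e (psi w))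

open Matrix MvPolynomial

section Derivations

variable {R A : Type*} [CommRing R] [CommRing A] [Algebra R A]

lemma derivation_finset_prod (D : Derivation R A A) {ι : Type*} [DecidableEq ι]
    (s : Finset ι) (f : ι → A) :
    D (∏ i ∈ s, f i) = ∑ i ∈ s, (∏ j ∈ s.erase i, f j) * D (f i) := by
  classical
  induction s using Finset.induction_on with
  | empty => simp
  | @insert a s ha ih =>
    rw [Finset.prod_insert ha, D.leibniz, smul_eq_mul, smul_eq_mul, ih, Finset.mul_sum,
      Finset.sum_insert ha, Finset.erase_insert ha, add_comm]
    congr 1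
    refine Finset.sum_congr rfl fun i hi => ?_
    rw [Finset.erase_insert_of_ne (by rintro rfl; exact ha hi),
      Finset.prod_insert (fun h => ha (Finset.mem_of_mem_erase h)), mul_assoc]

lemma derivation_det {n : Type*} [DecidableEq n] [Fintype n] (D : Derivation R A A)
    (M : Matrix n n A) :
    D M.det = ∑ k, (M.updateRow k fun j => D (M k j)).det := by
  classical
  have hrhs : ∀ k : n, (M.updateRow k fun j => D (M k j)).det =
      ∑ σ : Equiv.Perm n, ((Equiv.Perm.sign σ : ℤ) : A) *
        (D (M k (σ.symm k)) * ∏ i ∈ Finset.univ.erase (σ.symm k), M (σ i) i) := by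
    intro k
    rw [Matrix.det_apply']
    refine Finset.sum_congr rfl fun σ _ => ?_
    congr 1
    rw [← Finset.mul_prod_erase Finset.univ _ (Finset.mem_univ (σ.symm k))]
    congr 1
    · rw [Matrix.updateRow_apply, if_pos (Equiv.apply_symm_apply σ k)]
    · refine Finset.prod_congr rfl fun i hi => ?_
      have hne : σ i ≠ k := fun h =>
        Finset.ne_of_mem_erase hi (by rw [← h, Equiv.symm_apply_apply])
      rw [Matrix.updateRow_apply, if_neg hne]
  calc D M.det = ∑ σ : Equiv.Perm n, ((Equiv.Perm.sign σ : ℤ) : A) *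
      ∑ k, (∏ i ∈ Finset.univ.erase k, M (σ i) i) * D (M (σ k) k) := by
        rw [Matrix.det_apply', map_sum]
        refine Finset.sum_congr rfl fun σ _ => ?_
        rw [D.leibniz, D.map_intCast, smul_zero, add_zero, smul_eq_mul,
          derivation_finset_prod]
    _ = ∑ σ : Equiv.Perm n, ∑ k, ((Equiv.Perm.sign σ : ℤ) : A) *
        (D (M (σ k) k) * ∏ i ∈ Finset.univ.erase k, M (σ i) i) := by
        refine Finset.sum_congr rfl fun σ _ => ?_
        rw [Finset.mul_sum]
        exact Finset.sum_congr rfl fun k _ => by ring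
    _ = ∑ σ : Equiv.Perm n, ∑ k, ((Equiv.Perm.sign σ : ℤ) : A) *
        (D (M k (σ.symm k)) * ∏ i ∈ Finset.univ.erase (σ.symm k), M (σ i) i) := by
        refine Finset.sum_congr rfl fun σ _ => ?_
        rw [← Equiv.sum_comp σ.symm (fun k => ((Equiv.Perm.sign σ : ℤ) : A) *
          (D (M (σ k) k) * ∏ i ∈ Finset.univ.erase k, M (σ i) i))]
        simp only [Equiv.apply_symm_apply]
    _ = ∑ k, (M.updateRow k fun j => D (M k j)).det := by
        rw [Finset.sum_comm]
        exact Finset.sum_congr rfl fun k _ => (hrhs k).symm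

end Derivations

lemma det_updateRow_eq_sum_adjugate {α : Type*} [CommRing α] {n : Type*} [DecidableEq n]
    [Fintype n] (M : Matrix n n α) (k : n) (u : n → α) :
    (M.updateRow k u).det = ∑ i, u i * M.adjugate i k := by
  rw [← Matrix.cramer_transpose_apply, Matrix.cramer_eq_adjugate_mulVec]
  simp only [Matrix.mulVec, dotProduct, ← Matrix.adjugate_transpose,
    Matrix.transpose_apply]
  exact Finset.sum_congr rfl fun i _ => mul_comm _ _

lemma adjugate_eq_mul_of_det_eq_zero {F : Type*} [Field F] {n : ℕ}
    (M : Matrix (Fin n) (Fin n) F) (hdet : M.det = 0) :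
    ∃ u v : Fin n → F, ∀ i j, M.adjugate i j = u i * v j := by
  by_cases hB : ∀ i j, M.adjugate i j = 0
  · exact ⟨0, 0, fun i j => by simp [hB]⟩
  push_neg at hB
  obtain ⟨a, b, hab⟩ := hB
  cases n with
  | zero => exact a.elim0
  | succ m =>
    have hker : ∀ j, M.mulVec (fun i => M.adjugate i j) = 0 := by
      intro j; funext i
      have h := congrFun (congrFun (Matrix.mul_adjugate M) i) j
      rw [hdet, zero_smul] at h
      simpa [Matrix.mulVec, dotProduct, Matrix.mul_apply] using h
    set S := M.submatrix b.succAbove a.succAbove with hS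
    have hSdet : IsUnit S.det := by
      have h := Matrix.adjugate_fin_succ_eq_det_submatrix M a b
      refine isUnit_iff_ne_zero.mpr fun h0 => hab ?_
      rw [h, ← hS, h0, mul_zero]
    set t : Fin m → F := S⁻¹.mulVec (fun p => -(M (b.succAbove p) a)) with ht
    have hdetm : ∀ vv : Fin (m+1) → F, M.mulVec vv = 0 →
        ∀ q, vv (a.succAbove q) = vv a * t q := by
      intro vv hvv q
      have hrow : S.mulVec (fun q => vv (a.succAbove q))
          = vv a • (fun p => -(M (b.succAbove p) a)) := by
        funext p
        have h := congrFun hvv (b.succAbove p)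
        simp only [Matrix.mulVec, dotProduct, Pi.zero_apply] at h
        rw [Fin.sum_univ_succAbove (fun k => M (b.succAbove p) k * vv k) a] at h
        simp only [Matrix.mulVec, dotProduct, hS, Matrix.submatrix_apply,
          Pi.smul_apply, smul_eq_mul]
        linear_combination h
      have h2 : (fun q => vv (a.succAbove q))
          = vv a • S⁻¹.mulVec (fun p => -(M (b.succAbove p) a)) := by
        rw [← Matrix.mulVec_smul, ← hrow, Matrix.mulVec_mulVec,
          Matrix.nonsing_inv_mul _ hSdet, Matrix.one_mulVec]
      have h3 := congrFun h2 q
      simpa [ht, smul_eq_mul] using h3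
    have hprop : ∀ (x y : Fin (m+1) → F), M.mulVec x = 0 → M.mulVec y = 0 →
        ∀ i, x a * y i = y a * x i := by
      intro x y hx hy i
      rcases eq_or_ne i a with rfl | h
      · ring
      · obtain ⟨q, rfl⟩ := Fin.exists_succAbove_eq h
        rw [hdetm x hx q, hdetm y hy q]; ring
    refine ⟨fun i => M.adjugate i b * (M.adjugate a b)⁻¹, fun j => M.adjugate a j,
      fun i j => ?_⟩
    have h1 := hprop (fun i => M.adjugate i j) (fun i => M.adjugate i b)
      (hker j) (hker b) i
    field_simp
    linear_combination -h1


/-- The ideal generated by the entries of the adjugate of `Q_W`. -/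
noncomputable def adjIdeal {r : ℕ} (w : Fin r → E → K) : Ideal (MvPolynomial E K) :=
  Ideal.span (Set.range fun p : Fin r × Fin r => (Qform w).adjugate p.1 p.2)

lemma pderiv_Qform {r : ℕ} (w : Fin r → E → K) (e : E) (k : Fin r) :
    (fun j => pderiv e (Qform w k j))
      = (C (w k e) : MvPolynomial E K) • fun j => (C (w j e) : MvPolynomial E K) := by
  funext j
  show pderiv e (∑ f : E, C (w k f * w j f) * X f) = _
  rw [map_sum]
  rw [Finset.sum_eq_single e]
  · simp [pderiv_X, mul_comm]
  · intro f _ hf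
    simp [pderiv_X, Pi.single_eq_of_ne hf]
  · intro h; exact absurd (Finset.mem_univ e) h

lemma pderiv_psi {r : ℕ} (w : Fin r → E → K) (e : E) :
    pderiv e (psi w)
      = ∑ k, ∑ i, C (w k e) * (C (w i e) * (Qform w).adjugate i k) := by
  rw [psi, derivation_det (pderiv e)]
  refine Finset.sum_congr rfl fun k _ => ?_
  rw [pderiv_Qform, Matrix.det_updateRow_smul, det_updateRow_eq_sum_adjugate,
    Finset.mul_sum]

lemma psi_mem_adjIdeal {n : ℕ} (w : Fin (n + 1) → E → K) : psi w ∈ adjIdeal w := by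
  have h := congrFun (congrFun (Matrix.mul_adjugate (Qform w)) 0) 0
  have h2 : psi w = ∑ j, Qform w 0 j * (Qform w).adjugate j 0 := by
    rw [Matrix.mul_apply, Matrix.smul_apply, Matrix.one_apply_eq, smul_eq_mul, mul_one] at h
    rw [psi, ← h]
  rw [h2]
  exact Ideal.sum_mem _ fun j _ =>
    Ideal.mul_mem_left _ _ (Ideal.subset_span ⟨(j, 0), rfl⟩)

lemma pderiv_psi_mem_adjIdeal {r : ℕ} (w : Fin r → E → K) (e : E) :
    pderiv e (psi w) ∈ adjIdeal w := by
  rw [pderiv_psi]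
  exact Ideal.sum_mem _ fun k _ => Ideal.sum_mem _ fun i _ =>
    Ideal.mul_mem_left _ _ (Ideal.mul_mem_left _ _ (Ideal.subset_span ⟨(i, k), rfl⟩))

lemma jacIdeal_le_adjIdeal {n : ℕ} (w : Fin (n + 1) → E → K) :
    jacIdeal w ≤ adjIdeal w := by
  rw [jacIdeal, Ideal.span_le]
  rintro x (hx | ⟨e, rfl⟩)
  · rw [Set.mem_singleton_iff] at hx
    subst hx; exact psi_mem_adjIdeal w
  · exact pderiv_psi_mem_adjIdeal w e

lemma adjIdeal_le_minorIdeal {n : ℕ} (w : Fin (n + 1) → E → K) :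
    adjIdeal w ≤ minorIdeal w := by
  rw [adjIdeal, Ideal.span_le]
  rintro x ⟨⟨a, b⟩, rfl⟩
  show (Qform w).adjugate a b ∈ minorIdeal w
  rw [Matrix.adjugate_fin_succ_eq_det_submatrix]
  refine Ideal.mul_mem_left _ _ (Ideal.subset_span ?_)
  exact ⟨b.succAboveEmb, a.succAboveEmb, rfl⟩

lemma minorIdeal_le_adjIdeal {n : ℕ} (w : Fin (n + 1) → E → K) :
    minorIdeal w ≤ adjIdeal w := by
  rw [minorIdeal, Ideal.span_le]
  rintro p ⟨f, g, rfl⟩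
  have hmiss : ∀ f : Fin n ↪ Fin (n + 1), ∃ i : Fin (n + 1), ∀ q, f q ≠ i := by
    intro f
    by_contra h
    push_neg at h
    have hsurj : Function.Surjective f := fun i => (h i)
    have := Fintype.card_le_of_surjective f hsurj
    simp [Fintype.card_fin] at this
  have hbij : ∀ (f : Fin n ↪ Fin (n + 1)) (i : Fin (n + 1)), (∀ q, f q ≠ i) →
      ∃ σ : Equiv.Perm (Fin n), ∀ q, i.succAbove (σ q) = f q := by
    intro f i hi
    choose σ0 hσ0 using fun q => Fin.exists_succAbove_eq (hi q)
    have hinj : Function.Injective σ0 := by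
      intro x y h
      exact f.injective (by rw [← hσ0, ← hσ0, h])
    exact ⟨Equiv.ofBijective σ0 (Finite.injective_iff_bijective.mp hinj),
      fun q => hσ0 q⟩
  obtain ⟨i, hi⟩ := hmiss f
  obtain ⟨j, hj⟩ := hmiss g
  obtain ⟨σ, hσ⟩ := hbij f i hi
  obtain ⟨τ, hτ⟩ := hbij g j hj
  have hdet : ((Qform w).submatrix i.succAbove j.succAbove).det
      = (-1 : MvPolynomial E K) ^ ((i : ℕ) + (j : ℕ)) * (Qform w).adjugate j i := by
    rw [Matrix.adjugate_fin_succ_eq_det_submatrix, ← mul_assoc, ← pow_add,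
      Even.neg_one_pow ⟨(i : ℕ) + (j : ℕ), by ring⟩, one_mul]
  have hx : ((((Qform w).submatrix i.succAbove j.succAbove).submatrix id ⇑τ).submatrix ⇑σ id).det
      ∈ adjIdeal w := by
    rw [Matrix.det_permute, Matrix.det_permute', hdet]
    exact Ideal.mul_mem_left _ _ (Ideal.mul_mem_left _ _ (Ideal.mul_mem_left _ _
      (Ideal.subset_span ⟨(j, i), rfl⟩)))
  have hsub : (Qform w).submatrix f g
      = (((Qform w).submatrix i.succAbove j.succAbove).submatrix id ⇑τ).submatrix ⇑σ id := by
    ext q p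
    simp [Matrix.submatrix_apply, hσ, hτ]
  exact hsub ▸ hx


lemma exists_rightInverse {r : ℕ} {w : Fin r → E → K} (hw : LinearIndependent K w) :
    ∃ C0 : Matrix E (Fin r) K, (Matrix.of w) * C0 = 1 := by
  set W0 : Matrix (Fin r) E K := Matrix.of w with hW0
  have hinj : LinearMap.ker (Matrix.toLin' W0ᵀ) = ⊥ := by
    rw [LinearMap.ker_eq_bot']
    intro v hv
    have h0 : ∑ i, v i • w i = 0 := by
      funext e
      have h := congrFun hv e
      simpa [Matrix.toLin'_apply, Matrix.mulVec, dotProduct,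
        Matrix.transpose_apply, hW0, mul_comm] using h
    exact funext fun i => Fintype.linearIndependent_iff.mp hw v h0 i
  obtain ⟨g, hg⟩ := (Matrix.toLin' W0ᵀ).exists_leftInverse_of_injective hinj
  refine ⟨(LinearMap.toMatrix' g)ᵀ, ?_⟩
  have h1 : LinearMap.toMatrix' g * W0ᵀ = 1 := by
    apply Matrix.toLin'.injective
    rw [Matrix.toLin'_mul, Matrix.toLin'_toMatrix', Matrix.toLin'_one]
    exact hg
  have h2 := congrArg Matrix.transpose h1
  rwa [Matrix.transpose_mul, Matrix.transpose_one, Matrix.transpose_transpose] at h2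

lemma key_vanish {r : ℕ} {w : Fin r → E → K} (hw : LinearIndependent K w)
    {F : Type} [Field F] (φ : MvPolynomial E K →+* F)
    (hψ : φ (psi w) = 0) (hpd : ∀ e, φ (pderiv e (psi w)) = 0) (i j : Fin r) :
    φ ((Qform w).adjugate i j) = 0 := by
  set Mb : Matrix (Fin r) (Fin r) F := (Qform w).map φ with hMb
  have hMdet : Mb.det = 0 := by
    rw [psi] at hψ
    rw [hMb]
    show ((φ.mapMatrix (Qform w)) : Matrix (Fin r) (Fin r) F).det = 0
    rw [← RingHom.map_det]
    exact hψ
  have hadjmap : Mb.adjugate = ((Qform w).adjugate).map φ := by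
    rw [hMb]
    show Matrix.adjugate (φ.mapMatrix (Qform w)) = _
    rw [← RingHom.map_adjugate]
    rfl
  obtain ⟨u, v, huv⟩ := adjugate_eq_mul_of_det_eq_zero Mb hMdet
  set σK : K →+* F := φ.comp (MvPolynomial.C) with hσK
  set Wb : Matrix (Fin r) E F := (Matrix.of w).map σK with hWb
  obtain ⟨C0, hC0⟩ := exists_rightInverse hw
  set Cb : Matrix E (Fin r) F := C0.map σK with hCb
  have hWC : Wb * Cb = 1 := by
    rw [hWb, hCb, ← Matrix.map_mul, hC0]
    exact Matrix.map_one _ (map_zero σK) (map_one σK)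
  set N : Matrix E E F := Wbᵀ * Mb.adjugate * Wb with hN
  have hNval : ∀ e f, N e f = (∑ x, Wb x e * u x) * (∑ x, v x * Wb x f) := by
    intro e f
    rw [hN, Matrix.mul_apply]
    simp_rw [Matrix.mul_apply, Matrix.transpose_apply, huv, Finset.sum_mul_sum]
    rw [Finset.sum_comm]
    refine Finset.sum_congr rfl fun k _ => ?_
    rw [Finset.sum_mul]
    refine Finset.sum_congr rfl fun x _ => by ring
  have hNdiag : ∀ e, N e e = 0 := by
    intro e
    have hpde := hpd e
    rw [pderiv_psi] at hpde
    rw [map_sum] at hpde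
    simp_rw [map_sum, _root_.map_mul] at hpde
    have hNe : N e e = ∑ k, ∑ x, φ (C (w k e)) * (φ (C (w x e)) * φ ((Qform w).adjugate x k)) := by
      rw [hN, Matrix.mul_apply]
      refine Finset.sum_congr rfl fun k _ => ?_
      rw [Matrix.mul_apply, Finset.sum_mul]
      refine Finset.sum_congr rfl fun x _ => ?_
      rw [Matrix.transpose_apply, hadjmap]
      simp only [Matrix.map_apply, hWb, Matrix.of_apply, hσK, RingHom.comp_apply]
      ring
    rw [hNe]
    exact hpde
  have hQsymm : Mbᵀ = Mb := by
    ext a b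
    simp only [Matrix.transpose_apply, hMb, Matrix.map_apply, Qform, Matrix.of_apply]
    congr 1
    exact Finset.sum_congr rfl fun e _ => by rw [mul_comm (w b e) (w a e)]
  have hBsymm : Mb.adjugateᵀ = Mb.adjugate := by
    rw [Matrix.adjugate_transpose, hQsymm]
  have hNsymm : ∀ e f, N f e = N e f := by
    intro e f
    have h : Nᵀ = N := by
      rw [hN, Matrix.transpose_mul, Matrix.transpose_mul, Matrix.transpose_transpose,
        hBsymm, Matrix.mul_assoc]
    exact congrFun (congrFun h e) f
  have hNzero : N = 0 := by
    ext e f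
    have h1 : N e f * N f e = N e e * N f f := by
      rw [hNval, hNval, hNval, hNval]; ring
    rw [hNsymm e f, hNdiag e, hNdiag f, zero_mul] at h1
    exact mul_self_eq_zero.mp h1
  have hB0 : Mb.adjugate = 0 := by
    have hkey : Cbᵀ * N * Cb = Mb.adjugate := by
      rw [hN]
      calc Cbᵀ * (Wbᵀ * Mb.adjugate * Wb) * Cb
          = Cbᵀ * Wbᵀ * Mb.adjugate * (Wb * Cb) := by simp only [Matrix.mul_assoc]
        _ = Mb.adjugate := by
            rw [← Matrix.transpose_mul, hWC, Matrix.transpose_one, Matrix.one_mul,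
              Matrix.mul_one]
    rw [← hkey, hNzero, Matrix.mul_zero, Matrix.zero_mul]
  have h := congrFun (congrFun hB0 i) j
  rw [hadjmap] at h
  exact h

set_option synthInstance.maxHeartbeats 1000000 in
set_option maxHeartbeats 1000000 in
lemma adj_mem_radical {r : ℕ} {w : Fin r → E → K} (hw : LinearIndependent K w)
    (i j : Fin r) :
    (Qform w).adjugate i j ∈ (jacIdeal w).radical := by
  rw [Ideal.radical_eq_sInf]
  refine Ideal.mem_sInf.mpr ?_
  rintro P ⟨hle, hP⟩
  haveI := hP
  have hφmem : ∀ x ∈ jacIdeal w,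
      ((algebraMap (MvPolynomial E K ⧸ P) (FractionRing (MvPolynomial E K ⧸ P))).comp
        (Ideal.Quotient.mk P)) x = 0 := by
    intro x hx
    have hxP : x ∈ P := hle hx
    show (algebraMap (MvPolynomial E K ⧸ P) (FractionRing (MvPolynomial E K ⧸ P)))
      (Ideal.Quotient.mk P x) = 0
    rw [Ideal.Quotient.eq_zero_iff_mem.mpr hxP, map_zero]
  have h := key_vanish hw
    ((algebraMap (MvPolynomial E K ⧸ P) (FractionRing (MvPolynomial E K ⧸ P))).comp
      (Ideal.Quotient.mk P))
    (hφmem _ (Ideal.subset_span (Set.mem_union_left _ rfl)))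
    (fun e => hφmem _ (Ideal.subset_span (Set.mem_union_right _ ⟨e, rfl⟩))) i j
  have h0 : Ideal.Quotient.mk P ((Qform w).adjugate i j) = 0 := by
    apply IsFractionRing.injective (MvPolynomial E K ⧸ P) (FractionRing (MvPolynomial E K ⧸ P))
    simpa using h
  exact Ideal.Quotient.eq_zero_iff_mem.mp h0


/-- **Theorem (Non-smooth loci and second degeneracy schemes).**
For any configuration `W ⊆ K^E`, the radical of the Jacobian ideal `J_W` equals the
radical of the ideal `M_W` of submaximal minors of `Q_W`; in particular the minimal
primes over `J_W` and over `M_W` coincide. -/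
theorem jacIdeal_radical_eq_minorIdeal_radical
    (W : Submodule K (E → K)) {r : ℕ} (w : Fin r → E → K) (hw : IsBasisOf w W) :
    (jacIdeal w).radical = (minorIdeal w).radical ∧
    (jacIdeal w).minimalPrimes = (minorIdeal w).minimalPrimes := by
  obtain ⟨hind, -⟩ := hw
  have hrad : (jacIdeal w).radical = (minorIdeal w).radical := by
    cases r with
    | zero =>
      have h1 : jacIdeal w = ⊤ := by
        rw [Ideal.eq_top_iff_one]
        have hpsi : psi w = 1 := Matrix.det_fin_zero
        exact hpsi ▸ Ideal.subset_span (Set.mem_union_left _ rfl)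
      have h2 : minorIdeal w = ⊤ := by
        rw [Ideal.eq_top_iff_one]
        refine Ideal.subset_span ?_
        refine ⟨(Function.Embedding.refl _), (Function.Embedding.refl _), ?_⟩
        exact Matrix.det_fin_zero.symm
      rw [h1, h2]
    | succ n =>
      have hm : minorIdeal w = adjIdeal w :=
        le_antisymm (minorIdeal_le_adjIdeal w) (adjIdeal_le_minorIdeal w)
      have hJle : jacIdeal w ≤ minorIdeal w := hm ▸ jacIdeal_le_adjIdeal w
      have hadj : minorIdeal w ≤ (jacIdeal w).radical := by
        rw [hm, adjIdeal, Ideal.span_le]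
        rintro x ⟨⟨i, j⟩, rfl⟩
        exact adj_mem_radical hind i j
      refine le_antisymm (Ideal.radical_mono hJle) ?_
      calc (minorIdeal w).radical ≤ ((jacIdeal w).radical).radical :=
            Ideal.radical_mono hadj
        _ = (jacIdeal w).radical := Ideal.radical_idem _
  exact ⟨hrad, by rw [← Ideal.radical_minimalPrimes, hrad, Ideal.radical_minimalPrimes]⟩


end Config
end

section
/- Let K be a field, W ⊆ K^E a realization of a matroid M, and F ⊆ E any subset. Then: (i) for every basis B of M, B ∩ F is a basis of the restriction M|_F if and only if B ∖ F is a basis of the contraction M/F; and (ii) for any fixed choices of bases of W, W/F and W|_F, there exists c ∈ K^* (independent of B) such that for every basis B of M with B ∩ F a basis of M|_F, c_{W,B} = c² · c_{W/F, B∖F} · c_{W|_F, B∩F}. -/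
open scoped BigOperators

namespace Config

variable {K : Type} [Field K] {E : Type} [Fintype E] [DecidableEq E]

/-- The coordinate functional `e^∨` of `K^E` restricted to a subspace `W ⊆ K^E`. -/
noncomputable def coordFun (W : Submodule K (E → K)) (e : E) : W →ₗ[K] K :=
  (LinearMap.proj e).comp W.subtype

/-- `S ⊆ E` is independent in the matroid `M_W` realized by the configuration `W`:
the restricted coordinate functionals `(e^∨|_W)_{e ∈ S}` are linearly independent. -/
def Indep (W : Submodule K (E → K)) (S : Finset E) : Prop :=
  LinearIndependent K (fun e : S => coordFun W e)

/-- The coefficient `c_{W,B} = (det (w^i_e)_{1≤i≤r, e∈B})²`, the squared determinant of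
the `r × r` submatrix of the coefficient matrix of `w` with column set `B` (the square
is independent of the chosen ordering of the columns). -/
noncomputable def cSq {r : ℕ} (w : Fin r → E → K) (B : Finset E) : K :=
  if h : B.card = r then
    (Matrix.det (Matrix.of fun i j : Fin r =>
      w i ((Finset.equivFinOfCardEq h).symm j : E))) ^ 2
  else 0

/-- The restriction configuration `W|_F ⊆ K^F`: the image of `W` under the
coordinate projection `K^E ↠ K^F`. -/
noncomputable def restrictConfig (W : Submodule K (E → K)) (F : Finset E) :
    Submodule K ({x : E // x ∈ F} → K) :=
  W.map (LinearMap.funLeft K K (fun x : {x : E // x ∈ F} => (x : E)))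

/-- The deletion configuration `W ∖ F = W|_{E ∖ F} ⊆ K^{E ∖ F}`. -/
noncomputable def deleteConfig (W : Submodule K (E → K)) (F : Finset E) :
    Submodule K ({x : E // x ∉ F} → K) :=
  W.map (LinearMap.funLeft K K (fun x : {x : E // x ∉ F} => (x : E)))

/-- The contraction configuration `W/F = W ∩ K^{E ∖ F} ⊆ K^{E ∖ F}`: the vectors of `W`
vanishing on `F`, viewed in the coordinates `E ∖ F`. -/
noncomputable def contractConfig (W : Submodule K (E → K)) (F : Finset E) :
    Submodule K ({x : E // x ∉ F} → K) :=
  (W ⊓ LinearMap.ker (LinearMap.funLeft K K (fun x : {x : E // x ∈ F} => (x : E)))).map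
    (LinearMap.funLeft K K (fun x : {x : E // x ∉ F} => (x : E)))

/-- `B` is a basis (a maximal independent set) of the matroid `M_W`. -/
def IsBase (W : Submodule K (E → K)) (B : Finset E) : Prop :=
  Indep W B ∧ ∀ S : Finset E, Indep W S → S.card ≤ B.card


/-! ### Auxiliary lemmas -/

section Aux

set_option linter.unusedSectionVars false

/-- basis of a configuration from an independent spanning family. -/
noncomputable def basisOf {ι : Type} {v : ι → E → K} {V : Submodule K (E → K)}
    (h1 : LinearIndependent K v) (h2 : Submodule.span K (Set.range v) = V) :
    Module.Basis ι K V :=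
  (Module.Basis.span h1).map (LinearEquiv.ofEq _ _ h2)

@[simp] theorem basisOf_apply {ι : Type} {v : ι → E → K} {V : Submodule K (E → K)}
    (h1 : LinearIndependent K v) (h2 : Submodule.span K (Set.range v) = V) (i : ι) :
    (basisOf h1 h2 i : E → K) = v i := by
  simp [basisOf, Module.Basis.span_apply]

theorem coordFun_eq_constr {ι : Type} {v : ι → E → K} {V : Submodule K (E → K)}
    (h1 : LinearIndependent K v) (h2 : Submodule.span K (Set.range v) = V) (e : E) :
    coordFun V e = (basisOf h1 h2).constr K (fun i => v i e) := by
  apply (basisOf h1 h2).ext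
  intro i
  rw [Module.Basis.constr_basis]
  show ((basisOf h1 h2 i : E → K)) e = v i e
  rw [basisOf_apply]

theorem indep_iff_cols {ι : Type} [Fintype ι] {v : ι → E → K} {V : Submodule K (E → K)}
    (h1 : LinearIndependent K v) (h2 : Submodule.span K (Set.range v) = V) (S : Finset E) :
    Indep V S ↔ LinearIndependent K (fun e : S => fun i : ι => v i (e : E)) := by
  unfold Indep
  have hker : LinearMap.ker ((basisOf h1 h2).constr K (M' := K)).toLinearMap = ⊥ :=
    LinearEquiv.ker _
  have := LinearMap.linearIndependent_iff (v := fun e : S => fun i : ι => v i (e : E))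
    ((basisOf h1 h2).constr K (M' := K)).toLinearMap hker
  rw [← this]
  constructor <;> intro h <;>
  · convert h using 1
    funext e
    simp only [Function.comp]
    rw [coordFun_eq_constr h1 h2]
    rfl
    all_goals rfl

theorem span_proj_top :
    Submodule.span K (Set.range (fun e : E => (LinearMap.proj e : (E → K) →ₗ[K] K))) = ⊤ := by
  rw [Submodule.eq_top_iff']
  intro f
  have hf : f = ∑ e : E, f (Pi.single e 1) • (LinearMap.proj e : (E → K) →ₗ[K] K) := by
    apply (Pi.basisFun K E).ext
    intro j
    simp only [Pi.basisFun_apply, LinearMap.sum_apply, LinearMap.smul_apply,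
      LinearMap.proj_apply, smul_eq_mul]
    rw [Finset.sum_eq_single j]
    · simp
    · intro b _ hbj; simp [Pi.single_apply, hbj]
    · intro h; exact absurd (Finset.mem_univ j) h
  rw [hf]
  exact Submodule.sum_mem _ fun e _ =>
    Submodule.smul_mem _ _ (Submodule.subset_span (Set.mem_range_self e))

theorem span_coordFun_top (V : Submodule K (E → K)) :
    Submodule.span K (Set.range (coordFun V)) = ⊤ := by
  have hsurj : Function.Surjective (V.subtype.dualMap) :=
    LinearMap.dualMap_surjective_of_injective (Submodule.injective_subtype V)
  have : Set.range (coordFun V) = V.subtype.dualMap ''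
      (Set.range (fun e : E => (LinearMap.proj e : (E → K) →ₗ[K] K))) := by
    rw [← Set.range_comp]
    rfl
  rw [this, ← Submodule.map_span, span_proj_top, Submodule.map_top,
    LinearMap.range_eq_top.mpr hsurj]

theorem indep_card_le {ι : Type} [Fintype ι] {v : ι → E → K} {V : Submodule K (E → K)}
    (h1 : LinearIndependent K v) (h2 : Submodule.span K (Set.range v) = V)
    (S : Finset E) (hS : Indep V S) : S.card ≤ Fintype.card ι := by
  have hfr : Module.finrank K V = Fintype.card ι := Module.finrank_eq_card_basis (basisOf h1 h2)
  have := hS.fintype_card_le_finrank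
  rwa [Fintype.card_coe, Subspace.dual_finrank_eq, hfr] at this

theorem exists_indep_card {ι : Type} [Fintype ι] {v : ι → E → K} {V : Submodule K (E → K)}
    (h1 : LinearIndependent K v) (h2 : Submodule.span K (Set.range v) = V) :
    ∃ S : Finset E, Indep V S ∧ S.card = Fintype.card ι := by
  have hfr : Module.finrank K V = Fintype.card ι := Module.finrank_eq_card_basis (basisOf h1 h2)
  obtain ⟨b, hbsub, hbspan, hbli⟩ := exists_linearIndependent K (Set.range (coordFun V))
  rw [span_coordFun_top] at hbspan
  have hbfin : b.Finite := hbli.setFinite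
  haveI : Fintype b := hbfin.fintype
  have hbcard : b.toFinset.card = Fintype.card ι := by
    have := finrank_span_set_eq_card hbli
    rw [hbspan, finrank_top, Subspace.dual_finrank_eq, hfr] at this
    omega
  choose g hg using fun x : b => hbsub x.2
  have hginj : Function.Injective g := by
    intro x x' hx
    have := hg x
    rw [hx, hg x'] at this
    exact Subtype.ext this.symm
  refine ⟨Finset.image (fun x : b => g x) Finset.univ, ?_, ?_⟩
  · have hmem : ∀ e : (Finset.image (fun x : b => g x) Finset.univ : Finset E),
        coordFun V (e : E) ∈ b := by
      rintro ⟨e, he⟩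
      obtain ⟨x, -, hx⟩ := Finset.mem_image.mp he
      show coordFun V e ∈ b
      rw [← hx, hg x]
      exact x.2
    have hinj : Function.Injective
        (fun e : (Finset.image (fun x : b => g x) Finset.univ : Finset E) =>
          (⟨coordFun V (e : E), hmem e⟩ : b)) := by
      rintro ⟨e, he⟩ ⟨e', he'⟩ hee
      obtain ⟨x, -, hx⟩ := Finset.mem_image.mp he
      obtain ⟨x', -, hx'⟩ := Finset.mem_image.mp he'
      have h1' : coordFun V e = coordFun V e' := congrArg Subtype.val hee
      subst hx hx'
      rw [hg x, hg x'] at h1'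
      exact Subtype.ext (congrArg g (Subtype.ext h1'))
    have := hbli.comp _ hinj
    exact this
  · rw [Finset.card_image_of_injective _ hginj, Finset.card_univ, ← hbcard,
      Set.toFinset_card]

theorem isBase_iff {ι : Type} [Fintype ι] {v : ι → E → K} {V : Submodule K (E → K)}
    (h1 : LinearIndependent K v) (h2 : Submodule.span K (Set.range v) = V) (B : Finset E) :
    IsBase V B ↔ Indep V B ∧ B.card = Fintype.card ι := by
  constructor
  · rintro ⟨hi, hmax⟩
    refine ⟨hi, le_antisymm (indep_card_le h1 h2 B hi) ?_⟩
    obtain ⟨S, hS, hScard⟩ := exists_indep_card h1 h2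
    rw [← hScard]
    exact hmax S hS
  · rintro ⟨hi, hc⟩
    exact ⟨hi, fun S hS => by rw [hc]; exact indep_card_le h1 h2 S hS⟩

/-- extension by zero of a function on `m` to `m ⊕ n`, as a linear map. -/
def extL (K : Type) [Field K] (m n : Type) : (m → K) →ₗ[K] (m ⊕ n → K) where
  toFun x := Sum.elim x 0
  map_add' x y := by funext k; cases k <;> simp
  map_smul' c x := by funext k; cases k <;> simp

theorem extL_inj (m n : Type) : Function.Injective (extL K m n) := by
  intro x y h
  funext i
  exact congrFun h (Sum.inl i)

@[simp] theorem extL_apply (m n : Type) (x : m → K) (k : m ⊕ n) :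
    extL K m n x k = Sum.elim x 0 k := rfl

theorem sq_det_eq {R : Type} [CommRing R] {I J n1 n2 : Type}
    [Fintype n1] [DecidableEq n1] [Fintype n2] [DecidableEq n2]
    (A : Matrix I J R) (e1 : n1 ≃ I) (f1 : n1 ≃ J) (e2 : n2 ≃ I) (f2 : n2 ≃ J) :
    (A.submatrix e1 f1).det ^ 2 = (A.submatrix e2 f2).det ^ 2 := by
  have h1 : A.submatrix e2 f2
      = (A.submatrix e1 f1).submatrix (e2.trans e1.symm) (f2.trans f1.symm) := by
    ext i j; simp [Matrix.submatrix_apply]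
  rw [h1]
  generalize (A.submatrix e1 f1) = B
  generalize (e2.trans e1.symm) = σ
  generalize (f2.trans f1.symm) = τ
  have h2 : B.submatrix σ τ = (B.submatrix σ σ).submatrix id (τ.trans σ.symm) := by
    ext i j; simp
  rw [h2, Matrix.det_permute' (τ.trans σ.symm) (B.submatrix σ σ),
    Matrix.det_submatrix_equiv_self, mul_pow]
  have hs : (((Equiv.Perm.sign (τ.trans σ.symm) : ℤˣ) : ℤ) : R) ^ 2 = 1 := by
    rcases Int.units_eq_one_or (Equiv.Perm.sign (τ.trans σ.symm)) with h | h <;>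
      rw [h] <;> norm_num
  rw [hs, one_mul]

/-- Splitting the elements of `B` according to membership in `F`. -/
def splitEquiv (B F : Finset E) :
    {x // x ∈ B} ≃ {y // y ∈ B.subtype (· ∈ F)} ⊕ {y // y ∈ B.subtype (· ∉ F)} where
  toFun b :=
    if h : (b : E) ∈ F then Sum.inl ⟨⟨b, h⟩, Finset.mem_subtype.mpr b.2⟩
    else Sum.inr ⟨⟨b, h⟩, Finset.mem_subtype.mpr b.2⟩
  invFun := Sum.elim (fun t => ⟨t.val.val, Finset.mem_subtype.mp t.2⟩)
    (fun t => ⟨t.val.val, Finset.mem_subtype.mp t.2⟩)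
  left_inv b := by
    dsimp only
    by_cases h : (b : E) ∈ F
    · rw [dif_pos h]; exact Subtype.ext rfl
    · rw [dif_neg h]; exact Subtype.ext rfl
  right_inv t := by
    rcases t with t | t
    · simp only [Sum.elim_inl]
      exact dif_pos t.val.2
    · simp only [Sum.elim_inr]
      exact dif_neg t.val.2

end Aux


/-- **Theorem (Restriction–contraction for coefficients).**
Let `W ⊆ K^E` realize a matroid `M` and let `F ⊆ E`.  (i) For every basis `B` of `M`,
`B ∩ F` is a basis of `M|_F` iff `B ∖ F` is a basis of `M/F`.  (ii) For fixed bases of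
`W`, `W/F` and `W|_F` there is `c ∈ K^*`, independent of `B`, with
`c_{W,B} = c² · c_{W/F,B∖F} · c_{W|_F,B∩F}` for every such basis `B`. -/
theorem cSq_restriction_contraction
    (W : Submodule K (E → K)) (F : Finset E) {r rres rcon : ℕ}
    (w : Fin r → E → K)
    (wres : Fin rres → {x : E // x ∈ F} → K)
    (wcon : Fin rcon → {x : E // x ∉ F} → K)
    (hw : IsBasisOf w W)
    (hwres : IsBasisOf wres (restrictConfig W F))
    (hwcon : IsBasisOf wcon (contractConfig W F)) :
    (∀ B : Finset E, IsBase W B →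
      (IsBase (restrictConfig W F) (B.subtype (· ∈ F)) ↔
       IsBase (contractConfig W F) (B.subtype (· ∉ F)))) ∧
    ∃ c : K, c ≠ 0 ∧
      ∀ B : Finset E, IsBase W B → IsBase (restrictConfig W F) (B.subtype (· ∈ F)) →
        cSq w B = c ^ 2 * cSq wcon (B.subtype (· ∉ F)) * cSq wres (B.subtype (· ∈ F)) := by
  classical
  set p1 : (E → K) →ₗ[K] ({x : E // x ∈ F} → K) :=
    LinearMap.funLeft K K (fun x : {x : E // x ∈ F} => (x : E)) with hp1
  set p2 : (E → K) →ₗ[K] ({x : E // x ∉ F} → K) :=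
    LinearMap.funLeft K K (fun x : {x : E // x ∉ F} => (x : E)) with hp2
  -- lifts of the basis of the restriction
  have hres_lift : ∀ j, ∃ u, u ∈ W ∧ p1 u = wres j := by
    intro j
    have hmem : wres j ∈ restrictConfig W F := by
      rw [← hwres.2]; exact Submodule.subset_span (Set.mem_range_self j)
    obtain ⟨u, hu, hu2⟩ := Submodule.mem_map.mp hmem
    exact ⟨u, hu, hu2⟩
  choose ures huresW hures using hres_lift
  have huresv : ∀ j (x : {x : E // x ∈ F}), ures j (x : E) = wres j x := by
    intro j x
    exact congrFun (hures j) x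
  -- extensions by zero of the basis of the contraction
  set ucon : Fin rcon → E → K := fun j e => if h : e ∈ F then 0 else wcon j ⟨e, h⟩ with hucon
  have huconF : ∀ j (e : E) (h : e ∈ F), ucon j e = 0 := by
    intro j e h; simp [hucon, h]
  have huconNF : ∀ j (e : E) (h : e ∉ F), ucon j e = wcon j ⟨e, h⟩ := by
    intro j e h; simp [hucon, h]
  have hcon1 : ∀ j, p1 (ucon j) = 0 := by
    intro j; funext x; simpa [hp1, LinearMap.funLeft_apply] using huconF j x x.2
  have hcon2 : ∀ j, p2 (ucon j) = wcon j := by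
    intro j; funext x
    simpa [hp2, LinearMap.funLeft_apply] using huconNF j x x.2
  have hconW : ∀ j, ucon j ∈ W := by
    intro j
    have hmem : wcon j ∈ contractConfig W F := by
      rw [← hwcon.2]; exact Submodule.subset_span (Set.mem_range_self j)
    obtain ⟨y, hy, hy2⟩ := Submodule.mem_map.mp hmem
    have hyW : y ∈ W := hy.1
    have hyk : p1 y = 0 := LinearMap.mem_ker.mp hy.2
    have heq : ucon j = y := by
      funext e
      by_cases h : e ∈ F
      · have h0 : y e = 0 := congrFun hyk ⟨e, h⟩
        rw [huconF j e h, h0]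
      · have h1 : y e = wcon j ⟨e, h⟩ := (congrFun hy2 ⟨e, h⟩ : _)
        rw [huconNF j e h, h1]
    rw [heq]; exact hyW
  -- the combined family
  set uu : (Fin rres ⊕ Fin rcon) → E → K := Sum.elim ures ucon with huu
  have huuW : ∀ k, uu k ∈ W := by
    rintro (j | j)
    · exact huresW j
    · exact hconW j
  have hU_li : LinearIndependent K uu := by
    rw [Fintype.linearIndependent_iff]
    intro g hg
    have h1 : p1 (∑ k, g k • uu k) = 0 := by rw [hg]; simp
    rw [map_sum] at h1
    simp only [map_smul] at h1
    rw [Fintype.sum_sum_type] at h1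
    have h2 : ∑ j, g (Sum.inl j) • wres j = 0 := by
      simpa [huu, hures, hcon1] using h1
    have hres0 : ∀ j, g (Sum.inl j) = 0 := Fintype.linearIndependent_iff.mp hwres.1 _ h2
    have h4 : ∑ j, g (Sum.inr j) • ucon j = 0 := by
      rw [Fintype.sum_sum_type] at hg
      simpa [hres0, huu] using hg
    have h5 : ∑ j, g (Sum.inr j) • wcon j = 0 := by
      have := congrArg p2 h4
      simpa [map_sum, map_smul, hcon2] using this
    have hcon0 := Fintype.linearIndependent_iff.mp hwcon.1 _ h5
    rintro (j | j)
    exacts [hres0 j, hcon0 j]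
  have hU_span : Submodule.span K (Set.range uu) = W := by
    apply le_antisymm
    · rw [Submodule.span_le]; rintro _ ⟨k, rfl⟩; exact huuW k
    · intro x hx
      have hx1 : p1 x ∈ restrictConfig W F := Submodule.mem_map_of_mem hx
      rw [← hwres.2, Submodule.mem_span_range_iff_exists_fun] at hx1
      obtain ⟨cR, hcR⟩ := hx1
      set y : E → K := x - ∑ j, cR j • ures j with hy
      have hyW : y ∈ W := Submodule.sub_mem _ hx
        (Submodule.sum_mem _ fun j _ => Submodule.smul_mem _ _ (huresW j))
      have hy1 : p1 y = 0 := by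
        rw [hy, map_sub, map_sum]
        simp only [map_smul, hures]
        rw [hcR]
        simp
      have hy2 : p2 y ∈ contractConfig W F :=
        Submodule.mem_map_of_mem ⟨hyW, LinearMap.mem_ker.mpr hy1⟩
      rw [← hwcon.2, Submodule.mem_span_range_iff_exists_fun] at hy2
      obtain ⟨cC, hcC⟩ := hy2
      have hyeq : y = ∑ j, cC j • ucon j := by
        funext e
        by_cases h : e ∈ F
        · have h0 : y e = 0 := congrFun hy1 ⟨e, h⟩
          rw [h0]
          symm
          rw [Finset.sum_apply]
          apply Finset.sum_eq_zero
          intro j _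
          simp [huconF j e h]
        · have h1 : y e = ∑ j, cC j * wcon j ⟨e, h⟩ := by
            have := congrFun hcC ⟨e, h⟩
            simp only [Finset.sum_apply, Pi.smul_apply, smul_eq_mul] at this
            exact this.symm
          rw [h1, Finset.sum_apply]
          apply Finset.sum_congr rfl
          intro j _
          simp [huconNF j e h]
      have hxeq : x = ∑ j, cR j • ures j + ∑ j, cC j • ucon j := by
        rw [← hyeq, hy]; abel
      rw [Submodule.mem_span_range_iff_exists_fun]
      refine ⟨Sum.elim cR cC, ?_⟩
      rw [Fintype.sum_sum_type]
      simpa [huu] using hxeq.symm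
  -- bases and change of basis matrix
  set bW : Module.Basis (Fin r) K W := basisOf hw.1 hw.2 with hbW
  set bU : Module.Basis (Fin rres ⊕ Fin rcon) K W := basisOf hU_li hU_span with hbU
  set eIdx : Fin r ≃ (Fin rres ⊕ Fin rcon) := bW.indexEquiv bU with heIdx
  have hrsum : r = rres + rcon := by
    have := Fintype.card_congr eIdx
    simpa using this
  set bU' : Module.Basis (Fin r) K W := bU.reindex eIdx.symm with hbU'
  set M : Matrix (Fin r) (Fin r) K := bU'.toMatrix (fun i => bW i) with hM
  have hdet1 : M * bW.toMatrix (fun i => bU' i) = 1 := by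
    rw [hM]
    exact Module.Basis.toMatrix_mul_toMatrix_flip bU' bW
  have hc0 : M.det ≠ 0 := by
    intro h
    have h2 := congrArg Matrix.det hdet1
    rw [Matrix.det_mul, h, zero_mul, Matrix.det_one] at h2
    exact zero_ne_one h2
  have hbU'c : ∀ k : Fin r, (bU' k : E → K) = uu (eIdx k) := by
    intro k
    rw [hbU', Module.Basis.reindex_apply, Equiv.symm_symm, hbU, basisOf_apply]
  have key : ∀ i e, w i e = ∑ k, M k i * uu (eIdx k) e := by
    intro i e
    have h1 := bU'.sum_repr (bW i)
    have h2 := congrFun (congrArg (Subtype.val) h1) e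
    simp only [AddSubmonoidClass.coe_finset_sum, SetLike.val_smul, Finset.sum_apply,
      Pi.smul_apply, smul_eq_mul] at h2
    have h3 : ((bW i : E → K)) e = w i e := by rw [hbW, basisOf_apply]
    rw [← h3, ← h2]
    apply Finset.sum_congr rfl
    intro k _
    rw [hbU'c k, hM, Module.Basis.toMatrix_apply]
  -- the comparison linear equivalence on columns
  obtain ⟨Φ, hPhi⟩ : ∃ Φ : ((Fin rres ⊕ Fin rcon) → K) →ₗ[K] (Fin r → K),
      Φ = (Matrix.mulVecLin M.transpose).comp (LinearEquiv.funCongrLeft K K eIdx).toLinearMap :=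
    ⟨_, rfl⟩
  have hΦ : ∀ e : E, Φ (fun k => uu k e) = fun i => w i e := by
    intro e
    funext i
    rw [hPhi]
    show (M.transpose.mulVecLin ((LinearEquiv.funCongrLeft K K eIdx) fun k => uu k e)) i = w i e
    rw [Matrix.mulVecLin_apply, key i e]
    simp [Matrix.mulVec, dotProduct, Matrix.transpose_apply,
      LinearEquiv.funCongrLeft_apply]
  have hΦker : LinearMap.ker Φ = ⊥ := by
    rw [LinearMap.ker_eq_bot, hPhi]
    apply Function.Injective.comp (g := ⇑(Matrix.mulVecLin M.transpose))
    · have hdt : M.transpose.det ≠ 0 := by rwa [Matrix.det_transpose]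
      have hinv : Invertible M.transpose := Matrix.invertibleOfIsUnitDet _ (Ne.isUnit hdt)
      have hback : ∀ x : Fin r → K,
          (⅟M.transpose).mulVec (M.transpose.mulVec x) = x := by
        intro x
        rw [Matrix.mulVec_mulVec, invOf_mul_self, Matrix.one_mulVec]
      intro x y' hxy
      rw [← hback x, ← hback y',
        show M.transpose.mulVec x = M.transpose.mulVec y' from hxy]
    · exact (LinearEquiv.funCongrLeft K K eIdx).injective
  -- column criterion via the adapted family uu
  have hUcols : ∀ B : Finset E,
      Indep W B ↔ LinearIndependent K (fun e : B => fun k => uu k (e : E)) := by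
    intro B
    rw [indep_iff_cols hw.1 hw.2]
    have hli := LinearMap.linearIndependent_iff
      (v := fun e : B => fun k => uu k (e : E)) Φ hΦker
    have hfe : (⇑Φ ∘ fun e : B => fun k => uu k (e : E))
        = (fun e : B => fun i : Fin r => w i (e : E)) := by
      funext e
      exact hΦ e
    rw [← hli, hfe]
  -- claim (a)
  have claimA : ∀ B : Finset E, Indep W B →
      Indep (restrictConfig W F) (B.subtype (· ∈ F)) := by
    intro B hB
    rw [indep_iff_cols hwres.1 hwres.2]
    have hUB := (hUcols B).mp hB
    have hιinj : Function.Injective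
        (fun t : {y // y ∈ B.subtype (· ∈ F)} =>
          (⟨(t : {x : E // x ∈ F}).val, Finset.mem_subtype.mp t.2⟩ : {x // x ∈ B})) := by
      intro a b hab
      have h2 := congrArg (fun z : {x // x ∈ B} => (z : E)) hab
      exact Subtype.ext (Subtype.ext h2)
    have hsub := hUB.comp _ hιinj
    apply LinearIndependent.of_comp (extL K (Fin rres) (Fin rcon))
    have hfe : (⇑(extL K (Fin rres) (Fin rcon)) ∘ fun t : {y // y ∈ B.subtype (· ∈ F)} =>
          fun i : Fin rres => wres i ((t : {x : E // x ∈ F})))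
        = ((fun e : B => fun k => uu k (e : E)) ∘ fun t : {y // y ∈ B.subtype (· ∈ F)} =>
          (⟨(t : {x : E // x ∈ F}).val, Finset.mem_subtype.mp t.2⟩ : {x // x ∈ B})) := by
      funext t
      funext k
      rcases k with i | j
      · show wres i (t : {x : E // x ∈ F}) = ures i ((t : {x : E // x ∈ F}) : E)
        rw [huresv i (t : {x : E // x ∈ F})]
      · show (0 : K) = ucon j ((t : {x : E // x ∈ F}) : E)
        rw [huconF j _ (t : {x : E // x ∈ F}).2]
    rw [hfe]
    exact hsub
  -- base characterizations
  have hBaseW : ∀ B, IsBase W B ↔ Indep W B ∧ B.card = r := by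
    intro B
    rw [isBase_iff hw.1 hw.2 B, Fintype.card_fin]
  have hBaseRes : ∀ B, IsBase (restrictConfig W F) B ↔
      Indep (restrictConfig W F) B ∧ B.card = rres := by
    intro B
    rw [isBase_iff hwres.1 hwres.2 B, Fintype.card_fin]
  have hBaseCon : ∀ B, IsBase (contractConfig W F) B ↔
      Indep (contractConfig W F) B ∧ B.card = rcon := by
    intro B
    rw [isBase_iff hwcon.1 hwcon.2 B, Fintype.card_fin]
  -- cardinality splitting
  have hsplit : ∀ B : Finset E,
      (B.subtype (· ∈ F)).card + (B.subtype (· ∉ F)).card = B.card := by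
    intro B
    have h1 := Fintype.card_congr (splitEquiv B F)
    rw [Fintype.card_sum, Fintype.card_coe, Fintype.card_coe, Fintype.card_coe] at h1
    exact h1.symm
  -- claim (b)
  have claimB : ∀ B : Finset E, Indep W B → (B.subtype (· ∈ F)).card = rres →
      Indep (contractConfig W F) (B.subtype (· ∉ F)) := by
    intro B hB hcard
    rw [indep_iff_cols hwcon.1 hwcon.2]
    have hUB := (hUcols B).mp hB
    have hresLI : LinearIndependent K
        (fun t : {y // y ∈ B.subtype (· ∈ F)} =>
          fun i : Fin rres => wres i ((t : {x : E // x ∈ F}))) := by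
      have h := claimA B hB
      rwa [indep_iff_cols hwres.1 hwres.2] at h
    have hspan : ∀ x : Fin rres → K, ∃ cc : {y // y ∈ B.subtype (· ∈ F)} → K,
        ∑ t, cc t • (fun i : Fin rres => wres i ((t : {x : E // x ∈ F}))) = x := by
      intro x
      rcases Nat.eq_zero_or_pos rres with hz | hz
      · refine ⟨0, ?_⟩
        funext i
        exact absurd i.2 (by omega)
      · haveI hne : Nonempty {y // y ∈ B.subtype (· ∈ F)} := by
          rw [← Fintype.card_pos_iff, Fintype.card_coe, hcard]
          exact hz
        have htop := LinearIndependent.span_eq_top_of_card_eq_finrank hresLI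
          (by rw [Fintype.card_coe, hcard, Module.finrank_pi, Fintype.card_fin])
        have hx : x ∈ Submodule.span K (Set.range
            (fun t : {y // y ∈ B.subtype (· ∈ F)} =>
              fun i : Fin rres => wres i ((t : {x : E // x ∈ F})))) := by
          rw [htop]; trivial
        rwa [Submodule.mem_span_range_iff_exists_fun] at hx
    rw [Fintype.linearIndependent_iff]
    intro a ha
    obtain ⟨cc, hcc⟩ := hspan (fun i => ∑ s : {y // y ∈ B.subtype (· ∉ F)},
      a s * ures i (((s : {x : E // x ∉ F}) : E)))
    have hkey : (∑ s : {y // y ∈ B.subtype (· ∉ F)},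
          a s • (fun k => uu k (((s : {x : E // x ∉ F}) : E))))
        = ∑ t : {y // y ∈ B.subtype (· ∈ F)},
          cc t • (fun k => uu k (((t : {x : E // x ∈ F}) : E))) := by
      funext k
      simp only [Finset.sum_apply, Pi.smul_apply, smul_eq_mul]
      rcases k with i | j
      · have h2 := congrFun hcc i
        simp only [Finset.sum_apply, Pi.smul_apply, smul_eq_mul] at h2
        rw [show (∑ s : {y // y ∈ B.subtype (· ∉ F)},
              a s * uu (Sum.inl i) (((s : {x : E // x ∉ F}) : E)))
            = ∑ s : {y // y ∈ B.subtype (· ∉ F)},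
              a s * ures i (((s : {x : E // x ∉ F}) : E)) from rfl]
        rw [← h2]
        apply Finset.sum_congr rfl
        intro t _
        rw [show uu (Sum.inl i) (((t : {x : E // x ∈ F}) : E))
            = ures i (((t : {x : E // x ∈ F}) : E)) from rfl,
          huresv i (t : {x : E // x ∈ F})]
      · have h3 := congrFun ha j
        simp only [Finset.sum_apply, Pi.smul_apply, smul_eq_mul, Pi.zero_apply] at h3
        have hLz : (∑ s : {y // y ∈ B.subtype (· ∉ F)},
            a s * uu (Sum.inr j) (((s : {x : E // x ∉ F}) : E))) = 0 := by
          rw [← h3]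
          apply Finset.sum_congr rfl
          intro s _
          congr 1
          rw [show uu (Sum.inr j) (((s : {x : E // x ∉ F}) : E))
              = ucon j (((s : {x : E // x ∉ F}) : E)) from rfl,
            huconNF j _ (s : {x : E // x ∉ F}).2, Subtype.coe_eta]
        rw [hLz]
        symm
        apply Finset.sum_eq_zero
        intro t _
        rw [show uu (Sum.inr j) (((t : {x : E // x ∈ F}) : E))
            = ucon j (((t : {x : E // x ∈ F}) : E)) from rfl,
          huconF j _ (t : {x : E // x ∈ F}).2, mul_zero]
    set d : {x // x ∈ B} → K := fun b =>
      Sum.elim (fun t => - cc t) (fun s' => a s') (splitEquiv B F b) with hd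
    have h1 : (∑ t : {y // y ∈ B.subtype (· ∈ F)},
        d ((splitEquiv B F).symm (Sum.inl t)) •
          (fun k => uu k ((((splitEquiv B F).symm (Sum.inl t) : {x // x ∈ B}) : E))))
        = - ∑ t : {y // y ∈ B.subtype (· ∈ F)},
            cc t • (fun k => uu k (((t : {x : E // x ∈ F}) : E))) := by
      rw [← Finset.sum_neg_distrib]
      apply Finset.sum_congr rfl
      intro t _
      have hdt : d ((splitEquiv B F).symm (Sum.inl t)) = - cc t := by
        rw [hd]
        simp only [Equiv.apply_symm_apply, Sum.elim_inl]
      rw [hdt, neg_smul]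
      rfl
    have h2 : (∑ s' : {y // y ∈ B.subtype (· ∉ F)},
        d ((splitEquiv B F).symm (Sum.inr s')) •
          (fun k => uu k ((((splitEquiv B F).symm (Sum.inr s') : {x // x ∈ B}) : E))))
        = ∑ s' : {y // y ∈ B.subtype (· ∉ F)},
            a s' • (fun k => uu k (((s' : {x : E // x ∉ F}) : E))) := by
      apply Finset.sum_congr rfl
      intro s' _
      have hds : d ((splitEquiv B F).symm (Sum.inr s')) = a s' := by
        rw [hd]
        simp only [Equiv.apply_symm_apply, Sum.elim_inr]
      rw [hds]
      rfl
    have hdsum : ∑ b : {x // x ∈ B}, d b • (fun k => uu k ((b : E))) = 0 := by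
      refine ((Equiv.sum_comp (splitEquiv B F).symm
        (fun b : {x // x ∈ B} => d b • (fun k => uu k ((b : E))))).symm).trans ?_
      rw [Fintype.sum_sum_type]
      show (∑ t : {y // y ∈ B.subtype (· ∈ F)},
          d ((splitEquiv B F).symm (Sum.inl t)) •
            (fun k => uu k ((((splitEquiv B F).symm (Sum.inl t) : {x // x ∈ B}) : E))))
        + (∑ s' : {y // y ∈ B.subtype (· ∉ F)},
          d ((splitEquiv B F).symm (Sum.inr s')) •
            (fun k => uu k ((((splitEquiv B F).symm (Sum.inr s') : {x // x ∈ B}) : E)))) = 0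
      rw [h1, h2, hkey, neg_add_cancel]
    have hdz := Fintype.linearIndependent_iff.mp hUB d hdsum
    intro s
    have hds := hdz ((splitEquiv B F).symm (Sum.inr s))
    rw [hd] at hds
    simpa only [Equiv.apply_symm_apply, Sum.elim_inr] using hds
  refine ⟨?_, ?_⟩
  · intro B hB
    obtain ⟨hBI, hBcard⟩ := (hBaseW B).mp hB
    constructor
    · intro hres
      obtain ⟨hresI, hresCard⟩ := (hBaseRes _).mp hres
      have hconCard : (B.subtype (· ∉ F)).card = rcon := by
        have := hsplit B; omega
      exact (hBaseCon _).mpr ⟨claimB B hBI hresCard, hconCard⟩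
    · intro hcon
      obtain ⟨hconI, hconCard⟩ := (hBaseCon _).mp hcon
      have hresCard : (B.subtype (· ∈ F)).card = rres := by
        have := hsplit B; omega
      exact (hBaseRes _).mpr ⟨claimA B hBI, hresCard⟩
  · refine ⟨M.det, hc0, ?_⟩
    intro B hB hres
    obtain ⟨hBI, hBcard⟩ := (hBaseW B).mp hB
    obtain ⟨hresI, hresCard⟩ := (hBaseRes _).mp hres
    have hconCard : (B.subtype (· ∉ F)).card = rcon := by
      have := hsplit B; omega
    simp only [cSq]
    rw [dif_pos hBcard, dif_pos hconCard, dif_pos hresCard]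
    set γ : Fin r ≃ {x // x ∈ B} := (Finset.equivFinOfCardEq hBcard).symm with hγ
    set eres : Fin rres ≃ {y // y ∈ B.subtype (· ∈ F)} :=
      (Finset.equivFinOfCardEq hresCard).symm with heres
    set econ : Fin rcon ≃ {y // y ∈ B.subtype (· ∉ F)} :=
      (Finset.equivFinOfCardEq hconCard).symm with hecon
    set A : Matrix (Fin rres ⊕ Fin rcon) {x // x ∈ B} K :=
      Matrix.of (fun k (b : {x // x ∈ B}) => uu k ((b : E))) with hA
    set δ : (Fin rres ⊕ Fin rcon) ≃ {x // x ∈ B} :=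
      (Equiv.sumCongr eres econ).trans (splitEquiv B F).symm with hδ
    have hWU : Matrix.of (fun i j : Fin r => w i ((γ j : E)))
        = M.transpose * (A.submatrix eIdx γ) := by
      ext i j
      rw [Matrix.mul_apply]
      show w i ((γ j : E)) = ∑ k, M.transpose i k * A (eIdx k) (γ j)
      rw [key i ((γ j : E))]
      apply Finset.sum_congr rfl
      intro k _
      rfl
    have hdetWU : (Matrix.of (fun i j : Fin r => w i ((γ j : E)))).det
        = M.det * (A.submatrix eIdx γ).det := by
      rw [hWU, Matrix.det_mul, Matrix.det_transpose]
    have hsq := sq_det_eq A eIdx γ (Equiv.refl _) δ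
    have hblock : A.submatrix (Equiv.refl _) δ = Matrix.fromBlocks
        (Matrix.of fun i j : Fin rres => wres i ((eres j : {x : E // x ∈ F})))
        (Matrix.of fun (i : Fin rres) (j : Fin rcon) =>
          ures i (((econ j : {x : E // x ∉ F}) : E)))
        0
        (Matrix.of fun i j : Fin rcon => wcon i ((econ j : {x : E // x ∉ F}))) := by
      ext k j
      rcases k with i | i <;> rcases j with j' | j'
      · show uu (Sum.inl i) ((δ (Sum.inl j') : E)) = wres i ((eres j' : {x : E // x ∈ F}))
        rw [show uu (Sum.inl i) ((δ (Sum.inl j') : E))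
            = ures i ((δ (Sum.inl j') : E)) from rfl]
        exact huresv i (eres j' : {x : E // x ∈ F})
      · show uu (Sum.inl i) ((δ (Sum.inr j') : E))
            = ures i (((econ j' : {x : E // x ∉ F}) : E))
        rfl
      · show uu (Sum.inr i) ((δ (Sum.inl j') : E)) = 0
        rw [show uu (Sum.inr i) ((δ (Sum.inl j') : E))
            = ucon i ((δ (Sum.inl j') : E)) from rfl]
        exact huconF i _ ((eres j' : {x : E // x ∈ F}).2)
      · show uu (Sum.inr i) ((δ (Sum.inr j') : E)) = wcon i ((econ j' : {x : E // x ∉ F}))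
        have hco : ((δ (Sum.inr j') : {x // x ∈ B}) : E)
            = ((econ j' : {x : E // x ∉ F}) : E) := rfl
        rw [show uu (Sum.inr i) ((δ (Sum.inr j') : E))
            = ucon i ((δ (Sum.inr j') : E)) from rfl, hco,
          huconNF i _ ((econ j' : {x : E // x ∉ F}).2), Subtype.coe_eta]
    have hdb : (A.submatrix (Equiv.refl (Fin rres ⊕ Fin rcon)) δ).det
        = (Matrix.of fun i j : Fin rres => wres i ((eres j : {x : E // x ∈ F}))).det
          * (Matrix.of fun i j : Fin rcon => wcon i ((econ j : {x : E // x ∉ F}))).det := by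
      rw [hblock, Matrix.det_fromBlocks_zero₂₁]
    rw [hdetWU, mul_pow, hsq, hdb]
    ring


end Config
end

section
/- Let K be a field, E a finite set, W ⊆ K^E a K-linear subspace of dimension r, and w = (w^1,…,w^r) a basis of W with coordinates w^i_e = e^∨(w^i). Then the determinant of the symmetric r×r matrix Q_w := (Σ_{e∈E} x_e·w^i_e·w^j_e)_{i,j} over K[x_e : e ∈ E] equals Σ_{B ⊆ E, |B| = r} (det (w^i_e)_{1≤i≤r, e∈B})² · Π_{e∈B} x_e; that is, det Q_w = ψ_W computed from the same basis w. -/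
open scoped BigOperators
open MvPolynomial Matrix

namespace Config

variable {K : Type} [Field K] {E : Type} [Fintype E] [DecidableEq E]

/-- **Theorem (Configuration polynomial from configuration form).**
For a subspace `W ⊆ K^E` of dimension `r` with basis `w`, the determinant of the
configuration form `Q_w` equals `∑_{B ⊆ E, |B| = r} (det (w^i_e)_{i, e∈B})² · ∏_{e∈B} x_e`. -/
theorem det_Qform_eq_sum_cSq
    (W : Submodule K (E → K)) {r : ℕ} (w : Fin r → E → K) (hw : IsBasisOf w W) :
    (Qform w).det =
      ∑ B ∈ Finset.univ.powersetCard r,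
        MvPolynomial.C (cSq w B) * ∏ e ∈ B, MvPolynomial.X e := by
  classical
  set T : (Fin r → E) → MvPolynomial E K := fun f =>
    (∏ i, (C (w i (f i)) * X (f i) : MvPolynomial E K)) *
      (Matrix.of fun i j : Fin r => (C (w j (f i)) : MvPolynomial E K)).det with hT
  -- Step 1: multilinear expansion of the determinant
  have expand : (Qform w).det = ∑ f : Fin r → E, T f := by
    have h1 : Qform w = Matrix.of fun i : Fin r =>
        ∑ e : E, (C (w i e) * X e : MvPolynomial E K) •
          fun j : Fin r => (C (w j e) : MvPolynomial E K) := by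
      refine Matrix.ext fun i j => ?_
      simp only [Qform, Matrix.of_apply, Finset.sum_apply, Pi.smul_apply, smul_eq_mul,
        _root_.map_mul]
      exact Finset.sum_congr rfl fun e _ => by ring
    rw [h1]
    have h2 : (Matrix.of fun i : Fin r =>
        ∑ e : E, (C (w i e) * X e : MvPolynomial E K) •
          fun j : Fin r => (C (w j e) : MvPolynomial E K)).det
        = (Matrix.detRowAlternating (R := MvPolynomial E K) (n := Fin r)).toMultilinearMap
            (fun i : Fin r => ∑ e : E, (C (w i e) * X e : MvPolynomial E K) •
              fun j : Fin r => (C (w j e) : MvPolynomial E K)) := rfl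
    rw [h2, MultilinearMap.map_sum]
    refine Finset.sum_congr rfl fun f _ => ?_
    rw [MultilinearMap.map_smul_univ]
    rfl
  -- Step 2: extend RHS sum from `powersetCard r` to the full powerset
  have hRHS : (∑ B ∈ Finset.univ.powersetCard r,
        (C (cSq w B) * ∏ e ∈ B, X e : MvPolynomial E K))
      = ∑ B ∈ (Finset.univ : Finset E).powerset, C (cSq w B) * ∏ e ∈ B, X e := by
    refine Finset.sum_subset ?_ ?_
    · intro B hB
      exact Finset.mem_powerset.mpr (Finset.mem_powersetCard.mp hB).1
    · intro B _ hnB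
      have hcard : B.card ≠ r := fun h =>
        hnB (Finset.mem_powersetCard.mpr ⟨Finset.subset_univ B, h⟩)
      rw [cSq, dif_neg hcard, map_zero, zero_mul]
  rw [expand, hRHS,
    ← Finset.sum_fiberwise_of_maps_to
      (g := fun f : Fin r → E => Finset.image f Finset.univ)
      (fun f _ => Finset.mem_powerset.mpr (Finset.subset_univ _)) T]
  refine Finset.sum_congr rfl fun B _ => ?_
  by_cases hB : B.card = r
  · -- the fiber over `B` with `|B| = r`
    rw [cSq, dif_pos hB]
    set ε := Finset.equivFinOfCardEq hB with hε
    set A : Matrix (Fin r) (Fin r) K := Matrix.of fun i j => w i ((ε.symm j : E)) with hA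
    have hbij : ∑ σ : Equiv.Perm (Fin r), T (fun i => ((ε.symm (σ i) : E)))
        = ∑ f ∈ Finset.univ.filter
            (fun f : Fin r → E => Finset.image f Finset.univ = B), T f := by
      refine Finset.sum_bij (fun σ _ => fun i => ((ε.symm (σ i) : E))) ?_ ?_ ?_ ?_
      · intro σ _
        simp only [Finset.mem_filter, Finset.mem_univ, true_and]
        ext e
        simp only [Finset.mem_image, Finset.mem_univ, true_and]
        constructor
        · rintro ⟨i, rfl⟩; exact (ε.symm (σ i)).2
        · intro he
          exact ⟨σ⁻¹ (ε ⟨e, he⟩), by simp⟩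
      · intro σ _ τ _ h
        refine Equiv.ext fun i => ?_
        have h1 : ((ε.symm (σ i) : E)) = ((ε.symm (τ i) : E)) := congrFun h i
        exact ε.symm.injective (Subtype.coe_injective h1)
      · intro f hf
        have himg : Finset.image f Finset.univ = B := (Finset.mem_filter.mp hf).2
        have hinj : Function.Injective f := by
          have hcard : (Finset.image f Finset.univ).card
              = (Finset.univ : Finset (Fin r)).card := by
            simp [himg, hB]
          have := Finset.card_image_iff.mp hcard
          intro a b hab
          exact this (Finset.mem_coe.mpr (Finset.mem_univ a))
            (Finset.mem_coe.mpr (Finset.mem_univ b)) hab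
        have hmem : ∀ i, f i ∈ B := fun i =>
          himg ▸ Finset.mem_image_of_mem f (Finset.mem_univ i)
        have hσinj : Function.Injective (fun i => ε ⟨f i, hmem i⟩) := by
          intro a b hab
          exact hinj (congrArg Subtype.val (ε.injective hab))
        refine ⟨Equiv.ofBijective _ (Finite.injective_iff_bijective.mp hσinj),
          Finset.mem_univ _, ?_⟩
        funext i
        show ((ε.symm (ε ⟨f i, hmem i⟩) : E)) = f i
        simp
      · intro σ _; rfl
    rw [← hbij]
    have hXprod : ∀ σ : Equiv.Perm (Fin r),
        (∏ i, (X (((ε.symm (σ i) : E))) : MvPolynomial E K)) = ∏ e ∈ B, X e := by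
      intro σ
      refine Finset.prod_bij (fun i _ => ((ε.symm (σ i) : E))) ?_ ?_ ?_ ?_
      · intro i _; exact (ε.symm (σ i)).2
      · intro a _ b _ hab
        exact σ.injective (ε.symm.injective (Subtype.coe_injective hab))
      · intro e he
        exact ⟨σ⁻¹ (ε ⟨e, he⟩), Finset.mem_univ _, by simp⟩
      · intro i _; rfl
    have hdetpart : ∀ σ : Equiv.Perm (Fin r),
        (Matrix.of fun i j : Fin r =>
            (C (w j (((ε.symm (σ i) : E)))) : MvPolynomial E K)).det
        = ((Equiv.Perm.sign σ : ℤ) : MvPolynomial E K) * C A.det := by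
      intro σ
      have hsub : (Matrix.of fun i j : Fin r =>
            (C (w j (((ε.symm (σ i) : E)))) : MvPolynomial E K))
          = ((A.map (C : K →+* MvPolynomial E K)).transpose).submatrix σ id := rfl
      have h3 : (A.map (C : K →+* MvPolynomial E K)).det = C A.det := by
        rw [← RingHom.mapMatrix_apply, ← RingHom.map_det]
      rw [hsub, Matrix.det_permute, Matrix.det_transpose, h3]
    have hterm : ∀ σ : Equiv.Perm (Fin r),
        T (fun i => ((ε.symm (σ i) : E)))
        = (((Equiv.Perm.sign σ : ℤ) : MvPolynomial E K) * C (∏ i, A i (σ i))) *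
            (C A.det * ∏ e ∈ B, X e) := by
      intro σ
      rw [hT]
      simp only
      rw [Finset.prod_mul_distrib, hXprod σ, hdetpart σ, map_prod]
      have harw : ∀ i, w i ((ε.symm (σ i) : E)) = A i (σ i) := fun i => rfl
      simp only [harw]
      ring
    rw [Finset.sum_congr rfl (fun σ _ => hterm σ), ← Finset.sum_mul]
    have hdetsum : ∑ σ : Equiv.Perm (Fin r),
        (((Equiv.Perm.sign σ : ℤ) : MvPolynomial E K) * C (∏ i, A i (σ i)))
        = C (Aᵀ.det) := by
      rw [Matrix.det_apply', map_sum]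
      refine Finset.sum_congr rfl fun σ _ => ?_
      rw [_root_.map_mul, map_prod, map_intCast]
      simp [Matrix.transpose_apply]
    rw [hdetsum, Matrix.det_transpose, ← mul_assoc, ← _root_.map_mul, ← sq]
  · -- the fiber over `B` with `|B| ≠ r`: everything vanishes
    rw [cSq, dif_neg hB, map_zero, zero_mul]
    refine Finset.sum_eq_zero fun f hf => ?_
    have himg : Finset.image f Finset.univ = B := (Finset.mem_filter.mp hf).2
    have hni : ¬ Function.Injective f := by
      intro hinj
      apply hB
      rw [← himg, Finset.card_image_of_injective _ hinj, Finset.card_univ, Fintype.card_fin]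
    obtain ⟨a, b, hab, hne⟩ := Function.not_injective_iff.mp hni
    have hrow : (Matrix.of fun i j : Fin r => (C (w j (f i)) : MvPolynomial E K)) a
        = (Matrix.of fun i j : Fin r => (C (w j (f i)) : MvPolynomial E K)) b := by
      funext j
      simp [hab]
    rw [hT]
    simp only
    rw [Matrix.det_zero_of_row_eq hne hrow, mul_zero]

end Config
end

section
/- Let M be a connected matroid on a finite set E and let C₁ be any circuit of M. Then there exists a handle decomposition of M starting with F₁ = C₁: a chain F₁ ⊊ F₂ ⊊ ⋯ ⊊ F_k = E such that F₁ = C₁ is a circuit of M, the restriction M|_{F_i} is connected for every i, and F_i ∖ F_{i−1} is a handle of M|_{F_i} for i = 2,…,k. -/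
/-- A matroid on the finite ground set `E`, given by its independent sets. -/
structure FinMatroid (E : Type) [Fintype E] [DecidableEq E] where
  /-- The independent sets. -/
  Indep : Finset E → Prop
  /-- The empty set is independent. -/
  empty_indep : Indep ∅
  /-- Subsets of independent sets are independent. -/
  subset_indep : ∀ ⦃I J : Finset E⦄, Indep J → I ⊆ J → Indep I
  /-- The augmentation axiom. -/
  aug : ∀ ⦃I J : Finset E⦄, Indep I → Indep J → I.card < J.card →
    ∃ e ∈ J, e ∉ I ∧ Indep (insert e I)

namespace FinMatroid

variable {E : Type} [Fintype E] [DecidableEq E] (M : FinMatroid E)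

/-- A circuit: a minimal dependent set. -/
def IsCircuit (C : Finset E) : Prop :=
  ¬ M.Indep C ∧ ∀ D ⊂ C, M.Indep D

/-- The restriction `M|_F` is connected: `F` is nonempty and any two distinct elements
of `F` lie on a common circuit contained in `F` (the circuits of `M|_F` are exactly the
circuits of `M` contained in `F`). -/
def ConnectedOn (F : Finset E) : Prop :=
  F.Nonempty ∧ ∀ e ∈ F, ∀ f ∈ F, e ≠ f →
    ∃ C : Finset E, M.IsCircuit C ∧ C ⊆ F ∧ e ∈ C ∧ f ∈ C

/-- The matroid is connected: the ground set is nonempty and any two distinct elements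
lie on a common circuit. -/
def Connected : Prop :=
  M.ConnectedOn Finset.univ

/-- `H` is a handle of the restriction `M|_F`: `H` is a nonempty subset of `F` and every
circuit of `M|_F` (i.e. circuit of `M` contained in `F`) meeting `H` contains `H`. -/
def HandleOn (F H : Finset E) : Prop :=
  H.Nonempty ∧ H ⊆ F ∧
    ∀ C : Finset E, M.IsCircuit C → C ⊆ F → (∃ x ∈ C, x ∈ H) → H ⊆ C

variable {M}

lemma circuit_nonempty {C : Finset E} (hC : M.IsCircuit C) : C.Nonempty := by
  rcases C.eq_empty_or_nonempty with h | h
  · exact absurd (h ▸ M.empty_indep) hC.1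
  · exact h

lemma circuit_eq_of_subset {C D : Finset E} (hC : M.IsCircuit C) (hD : M.IsCircuit D)
    (h : D ⊆ C) : D = C := by
  by_cases h' : D = C
  · exact h'
  · exact absurd (hC.2 D (Finset.ssubset_iff_subset_ne.mpr ⟨h, h'⟩)) hD.1

lemma exists_maximal_indep_aux : ∀ (n : ℕ) (I X : Finset E), X.card - I.card ≤ n →
    M.Indep I → I ⊆ X →
    ∃ B, I ⊆ B ∧ B ⊆ X ∧ M.Indep B ∧ ∀ e ∈ X, e ∉ B → ¬ M.Indep (insert e B) := by
  intro n
  induction n with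
  | zero =>
    intro I X h hI hIX
    have hc : X.card ≤ I.card := by omega
    have hXI : I = X := Finset.eq_of_subset_of_card_le hIX hc
    subst hXI
    exact ⟨I, Finset.Subset.refl I, Finset.Subset.refl I, hI,
      fun e he hne => absurd he hne⟩
  | succ n ih =>
    intro I X h hI hIX
    by_cases hx : ∃ e ∈ X, e ∉ I ∧ M.Indep (insert e I)
    · obtain ⟨e, heX, heI, hind⟩ := hx
      have hcard : X.card - (insert e I).card ≤ n := by
        rw [Finset.card_insert_of_notMem heI]
        have := Finset.card_le_card hIX
        omega
      obtain ⟨B, hB1, hB2, hB3, hB4⟩ := ih (insert e I) X hcard hind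
        (Finset.insert_subset heX hIX)
      exact ⟨B, (Finset.subset_insert e I).trans hB1, hB2, hB3, hB4⟩
    · push_neg at hx
      exact ⟨I, Finset.Subset.refl I, hIX, hI, hx⟩

lemma exists_maximal_indep {I X : Finset E} (hI : M.Indep I) (hIX : I ⊆ X) :
    ∃ B, I ⊆ B ∧ B ⊆ X ∧ M.Indep B ∧ ∀ e ∈ X, e ∉ B → ¬ M.Indep (insert e B) :=
  exists_maximal_indep_aux _ I X le_rfl hI hIX

lemma exists_circuit_of_dep : ∀ (X : Finset E), ¬ M.Indep X → ∃ C ⊆ X, M.IsCircuit C := by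
  intro X
  induction X using Finset.strongInductionOn with
  | _ X ih =>
    intro hX
    by_cases h : ∀ D ⊂ X, M.Indep D
    · exact ⟨X, Finset.Subset.refl X, hX, h⟩
    · push_neg at h
      obtain ⟨D, hDX, hD⟩ := h
      obtain ⟨C, hCD, hC⟩ := ih D hDX hD
      exact ⟨C, hCD.trans hDX.subset, hC⟩

lemma weak_elim {C1 C2 : Finset E} (h1 : M.IsCircuit C1) (h2 : M.IsCircuit C2)
    (hne : C1 ≠ C2) {e : E} (he1 : e ∈ C1) (he2 : e ∈ C2) :
    ¬ M.Indep ((C1 ∪ C2).erase e) := by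
  have hx : ∃ x ∈ C1, x ∉ C2 := by
    by_contra h
    push_neg at h
    exact hne (circuit_eq_of_subset h2 h1 h)
  obtain ⟨x, hx1, hx2⟩ := hx
  have hIx : M.Indep (C1.erase x) := h1.2 _ (Finset.erase_ssubset hx1)
  obtain ⟨B, hB1, hB2, hB3, hB4⟩ := exists_maximal_indep hIx
    ((Finset.erase_subset x C1).trans Finset.subset_union_left)
  have hxB : x ∉ B := by
    intro hxB
    refine h1.1 (M.subset_indep hB3 ?_)
    intro a ha
    by_cases hax : a = x
    · exact hax ▸ hxB
    · exact hB1 (Finset.mem_erase.mpr ⟨hax, ha⟩)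
  have hy : ∃ y ∈ C2, y ∉ B := by
    by_contra h
    push_neg at h
    exact h2.1 (M.subset_indep hB3 h)
  obtain ⟨y, hy1, hy2⟩ := hy
  have hxy : x ≠ y := fun h => hx2 (h ▸ hy1)
  intro hD
  have hBsub : B ⊆ ((C1 ∪ C2).erase x).erase y := by
    intro a ha
    simp only [Finset.mem_erase]
    exact ⟨fun h => hy2 (h ▸ ha), fun h => hxB (h ▸ ha), hB2 ha⟩
  have hxU : x ∈ C1 ∪ C2 := Finset.mem_union_left _ hx1
  have hyU : y ∈ C2 → y ∈ C1 ∪ C2 := fun h => Finset.mem_union_right _ h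
  have hcard2 : (((C1 ∪ C2).erase x).erase y).card = (C1 ∪ C2).card - 2 := by
    rw [Finset.card_erase_of_mem, Finset.card_erase_of_mem hxU]
    · omega
    · exact Finset.mem_erase.mpr ⟨fun h => hxy (h.symm), hyU hy1⟩
  have heU : e ∈ C1 ∪ C2 := Finset.mem_union_left _ he1
  have hcardD : ((C1 ∪ C2).erase e).card = (C1 ∪ C2).card - 1 :=
    Finset.card_erase_of_mem heU
  have hN : 2 ≤ (C1 ∪ C2).card := by
    have := Finset.one_lt_card.mpr ⟨x, hxU, y, hyU hy1, hxy⟩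
    omega
  have hlt : B.card < ((C1 ∪ C2).erase e).card := by
    have := Finset.card_le_card hBsub
    omega
  obtain ⟨z, hz, hz2, hz3⟩ := M.aug hB3 hD hlt
  exact hB4 z (Finset.mem_of_mem_erase hz) hz2 hz3

lemma strong_elim : ∀ (n : ℕ) {C1 C2 : Finset E}, (C1 ∪ C2).card ≤ n →
    M.IsCircuit C1 → M.IsCircuit C2 → ∀ {e f : E}, e ∈ C1 → e ∈ C2 → f ∈ C1 → f ∉ C2 →
    ∃ C3, M.IsCircuit C3 ∧ f ∈ C3 ∧ C3 ⊆ (C1 ∪ C2).erase e := by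
  intro n
  induction n with
  | zero =>
    intro C1 C2 hcard h1 h2 e f he1 he2 hf1 hf2
    have : e ∈ C1 ∪ C2 := Finset.mem_union_left _ he1
    have := Finset.card_pos.mpr ⟨e, this⟩
    omega
  | succ n ih =>
    intro C1 C2 hcard h1 h2 e f he1 he2 hf1 hf2
    have hne : C1 ≠ C2 := fun h => hf2 (h ▸ hf1)
    obtain ⟨D, hD_sub, hD⟩ := exists_circuit_of_dep _ (weak_elim h1 h2 hne he1 he2)
    by_cases hfD : f ∈ D
    · exact ⟨D, hD, hfD, hD_sub⟩
    have heD : e ∉ D := fun hh => (Finset.mem_erase.mp (hD_sub hh)).1 rfl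
    have hDsub' : D ⊆ C1 ∪ C2 := fun a ha => (Finset.mem_erase.mp (hD_sub ha)).2
    have hg : ∃ g ∈ D, g ∉ C1 := by
      by_contra h
      push_neg at h
      have hDC1 : D = C1 := circuit_eq_of_subset h1 hD h
      exact heD (hDC1 ▸ he1)
    obtain ⟨g, hgD, hgC1⟩ := hg
    have hgC2 : g ∈ C2 := by
      rcases Finset.mem_union.mp (hDsub' hgD) with h | h
      · exact absurd h hgC1
      · exact h
    -- first application: circuits (C2, D), common g, target e
    have hcard1 : (C2 ∪ D).card ≤ n := by
      have hsub : C2 ∪ D ⊆ C1 ∪ C2 :=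
        Finset.union_subset Finset.subset_union_right hDsub'
      have hf_not : f ∉ C2 ∪ D := by
        rw [Finset.mem_union]
        rintro (h | h)
        · exact hf2 h
        · exact hfD h
      have : (C2 ∪ D).card < (C1 ∪ C2).card :=
        Finset.card_lt_card ⟨hsub, fun hsup => hf_not (hsup (Finset.mem_union_left _ hf1))⟩
      omega
    obtain ⟨C4, hC4, heC4, hC4sub⟩ := ih hcard1 h2 hD hgC2 hgD he2 heD
    have hC4subU : C4 ⊆ C1 ∪ C2 := by
      intro a ha
      have := (Finset.mem_erase.mp (hC4sub ha)).2
      rcases Finset.mem_union.mp this with h | h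
      · exact Finset.mem_union_right _ h
      · exact hDsub' h
    have hgC4 : g ∉ C4 := fun h => (Finset.mem_erase.mp (hC4sub h)).1 rfl
    have hfC4 : f ∉ C4 := by
      intro h
      have := (Finset.mem_erase.mp (hC4sub h)).2
      rcases Finset.mem_union.mp this with h' | h'
      · exact hf2 h'
      · exact hfD h'
    -- second application: circuits (C1, C4), common e, target f
    have hcard2 : (C1 ∪ C4).card ≤ n := by
      have hsub : C1 ∪ C4 ⊆ C1 ∪ C2 :=
        Finset.union_subset Finset.subset_union_left hC4subU
      have hg_not : g ∉ C1 ∪ C4 := by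
        rw [Finset.mem_union]
        rintro (h | h)
        · exact hgC1 h
        · exact hgC4 h
      have : (C1 ∪ C4).card < (C1 ∪ C2).card :=
        Finset.card_lt_card ⟨hsub, fun hsup => hg_not (hsup (Finset.mem_union_right _ hgC2))⟩
      omega
    obtain ⟨C3, hC3, hfC3, hC3sub⟩ := ih hcard2 h1 hC4 he1 heC4 hf1 hfC4
    refine ⟨C3, hC3, hfC3, ?_⟩
    intro a ha
    have := Finset.mem_erase.mp (hC3sub ha)
    refine Finset.mem_erase.mpr ⟨this.1, ?_⟩
    rcases Finset.mem_union.mp this.2 with h | h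
    · exact Finset.mem_union_left _ h
    · exact hC4subU h

lemma circuit_trans : ∀ (n : ℕ) {C1 C2 : Finset E}, (C1 ∪ C2).card ≤ n →
    M.IsCircuit C1 → M.IsCircuit C2 → ∀ {e f : E}, e ∈ C1 → f ∈ C2 →
    (∃ g, g ∈ C1 ∧ g ∈ C2) →
    ∃ C, M.IsCircuit C ∧ C ⊆ C1 ∪ C2 ∧ e ∈ C ∧ f ∈ C := by
  intro n
  induction n with
  | zero =>
    intro C1 C2 hcard h1 h2 e f he hf _
    have : e ∈ C1 ∪ C2 := Finset.mem_union_left _ he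
    have := Finset.card_pos.mpr ⟨e, this⟩
    omega
  | succ n ih =>
    intro C1 C2 hcard h1 h2 e f he hf hint
    by_cases hfC1 : f ∈ C1
    · exact ⟨C1, h1, Finset.subset_union_left, he, hfC1⟩
    by_cases heC2 : e ∈ C2
    · exact ⟨C2, h2, Finset.subset_union_right, heC2, hf⟩
    obtain ⟨g, hg1, hg2⟩ := hint
    have hgU : g ∈ C1 ∪ C2 := Finset.mem_union_left _ hg1
    obtain ⟨C3, hC3, heC3, hC3sub⟩ := strong_elim (n+1) hcard h1 h2 hg1 hg2 he heC2
    by_cases hfC3 : f ∈ C3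
    · exact ⟨C3, hC3, hC3sub.trans (Finset.erase_subset _ _), heC3, hfC3⟩
    have hC3subU : C3 ⊆ C1 ∪ C2 := hC3sub.trans (Finset.erase_subset _ _)
    have hgC3 : g ∉ C3 := fun h => (Finset.mem_erase.mp (hC3sub h)).1 rfl
    have hx : ∃ x, x ∈ C3 ∧ x ∈ C2 := by
      by_contra h
      push_neg at h
      have hsubC1 : C3 ⊆ C1 := by
        intro a ha
        rcases Finset.mem_union.mp (hC3subU ha) with h' | h'
        · exact h'
        · exact absurd h' (h a ha)
      exact hgC3 ((circuit_eq_of_subset h1 hC3 hsubC1) ▸ hg1)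
    obtain ⟨x, hx3, hx2⟩ := hx
    by_cases hcase : (C3 ∪ C2).card < (C1 ∪ C2).card
    · have hle : (C3 ∪ C2).card ≤ n := by omega
      obtain ⟨C, hC, hsub, heC, hfC⟩ := ih hle hC3 h2 heC3 hf ⟨x, hx3, hx2⟩
      exact ⟨C, hC, hsub.trans (Finset.union_subset hC3subU Finset.subset_union_right),
        heC, hfC⟩
    · have hequnion : C3 ∪ C2 = C1 ∪ C2 :=
        Finset.eq_of_subset_of_card_le
          (Finset.union_subset hC3subU Finset.subset_union_right) (le_of_not_gt hcase)
      have hC1diff : ∀ a ∈ C1, a ∉ C2 → a ∈ C3 := by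
        intro a ha ha2
        have : a ∈ C3 ∪ C2 := hequnion ▸ (Finset.mem_union_left _ ha)
        rcases Finset.mem_union.mp this with h' | h'
        · exact h'
        · exact absurd h' ha2
      have hcard' : (C2 ∪ C1).card ≤ n + 1 := by rwa [Finset.union_comm]
      obtain ⟨C4, hC4, hfC4, hC4sub⟩ := strong_elim (n+1) hcard' h2 h1 hg2 hg1 hf hfC1
      rw [Finset.union_comm C2 C1] at hC4sub
      by_cases heC4 : e ∈ C4
      · exact ⟨C4, hC4, hC4sub.trans (Finset.erase_subset _ _), heC4, hfC4⟩
      have hC4subU : C4 ⊆ C1 ∪ C2 := hC4sub.trans (Finset.erase_subset _ _)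
      have hgC4 : g ∉ C4 := fun h => (Finset.mem_erase.mp (hC4sub h)).1 rfl
      have hy : ∃ y, y ∈ C3 ∧ y ∈ C4 := by
        have hy' : ∃ y ∈ C4, y ∉ C2 := by
          by_contra h
          push_neg at h
          exact hgC4 ((circuit_eq_of_subset h2 hC4 h) ▸ hg2)
        obtain ⟨y, hy4, hy2⟩ := hy'
        have hy1 : y ∈ C1 := by
          rcases Finset.mem_union.mp (hC4subU hy4) with h' | h'
          · exact h'
          · exact absurd h' hy2
        exact ⟨y, hC1diff y hy1 hy2, hy4⟩
      obtain ⟨y, hy3, hy4⟩ := hy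
      have hcard3 : (C3 ∪ C4).card ≤ n := by
        have hsub : C3 ∪ C4 ⊆ (C1 ∪ C2).erase g := Finset.union_subset hC3sub hC4sub
        have h1' := Finset.card_le_card hsub
        have h2' : ((C1 ∪ C2).erase g).card = (C1 ∪ C2).card - 1 :=
          Finset.card_erase_of_mem hgU
        have := Finset.card_pos.mpr ⟨g, hgU⟩
        omega
      obtain ⟨C, hC, hsub, heC, hfC⟩ := ih hcard3 hC3 hC4 heC3 hfC4 ⟨y, hy3, hy4⟩
      exact ⟨C, hC, hsub.trans (Finset.union_subset hC3subU hC4subU), heC, hfC⟩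

lemma connectedOn_union_circuit {F C : Finset E} (hF : M.ConnectedOn F)
    (hC : M.IsCircuit C) (hmeet : ∃ g ∈ C, g ∈ F) : M.ConnectedOn (F ∪ C) := by
  obtain ⟨g, hgC, hgF⟩ := hmeet
  obtain ⟨a, ha⟩ := hF.1
  refine ⟨⟨a, Finset.mem_union_left _ ha⟩, ?_⟩
  intro e he f hf hef
  by_cases heF : e ∈ F
  · by_cases hfF : f ∈ F
    · obtain ⟨D, hD, hDsub, heD, hfD⟩ := hF.2 e heF f hfF hef
      exact ⟨D, hD, hDsub.trans Finset.subset_union_left, heD, hfD⟩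
    · have hfC : f ∈ C := by
        rcases Finset.mem_union.mp hf with h | h
        · exact absurd h hfF
        · exact h
      by_cases heC : e ∈ C
      · exact ⟨C, hC, Finset.subset_union_right, heC, hfC⟩
      · have heg : e ≠ g := fun h => heC (h ▸ hgC)
        obtain ⟨D, hD, hDsub, heD, hgD⟩ := hF.2 e heF g hgF heg
        obtain ⟨C', hC', hsub, heC', hfC'⟩ :=
          circuit_trans (D ∪ C).card le_rfl hD hC heD hfC ⟨g, hgD, hgC⟩
        exact ⟨C', hC', hsub.trans
          (Finset.union_subset (hDsub.trans Finset.subset_union_left)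
            Finset.subset_union_right), heC', hfC'⟩
  · have heC : e ∈ C := by
      rcases Finset.mem_union.mp he with h | h
      · exact absurd h heF
      · exact h
    by_cases hfC : f ∈ C
    · exact ⟨C, hC, Finset.subset_union_right, heC, hfC⟩
    · have hfF : f ∈ F := by
        rcases Finset.mem_union.mp hf with h | h
        · exact h
        · exact absurd h hfC
      have hfg : g ≠ f := fun h => hfC (h ▸ hgC)
      obtain ⟨D, hD, hDsub, hgD, hfD⟩ := hF.2 g hgF f hfF hfg
      obtain ⟨C', hC', hsub, heC', hfC'⟩ :=
        circuit_trans (C ∪ D).card le_rfl hC hD heC hfD ⟨g, hgC, hgD⟩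
      exact ⟨C', hC', hsub.trans
        (Finset.union_subset Finset.subset_union_right
          (hDsub.trans Finset.subset_union_left)), heC', hfC'⟩

lemma exists_step (hconn : M.Connected) {F : Finset E} (hF : M.ConnectedOn F)
    (hFne : F ≠ Finset.univ) :
    ∃ F', F ⊂ F' ∧ M.ConnectedOn F' ∧ M.HandleOn F' (F' \ F) := by
  classical
  have hex : ∃ C, M.IsCircuit C ∧ (∃ x ∈ C, x ∈ F) ∧ (C \ F).Nonempty := by
    obtain ⟨e, he⟩ : ∃ e, e ∉ F := by
      by_contra h
      push_neg at h
      exact hFne (Finset.eq_univ_iff_forall.mpr h)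
    obtain ⟨f, hf⟩ := hF.1
    have hef : e ≠ f := fun h => he (h ▸ hf)
    obtain ⟨C, hC, _, heC, hfC⟩ :=
      hconn.2 e (Finset.mem_univ e) f (Finset.mem_univ f) hef
    exact ⟨C, hC, ⟨f, hfC, hf⟩, ⟨e, Finset.mem_sdiff.mpr ⟨heC, he⟩⟩⟩
  set T := Finset.univ.powerset.filter
    (fun C => M.IsCircuit C ∧ (∃ x ∈ C, x ∈ F) ∧ (C \ F).Nonempty) with hT
  have hTne : T.Nonempty := by
    obtain ⟨C, hC⟩ := hex
    exact ⟨C, Finset.mem_filter.mpr ⟨Finset.mem_powerset.mpr (Finset.subset_univ C), hC⟩⟩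
  obtain ⟨C, hCT, hCmin⟩ := T.exists_min_image (fun C => (C \ F).card) hTne
  obtain ⟨hC, hmeet, hCdiff⟩ := (Finset.mem_filter.mp hCT).2
  obtain ⟨w, hw⟩ := hCdiff
  have hwC := (Finset.mem_sdiff.mp hw).1
  have hwF := (Finset.mem_sdiff.mp hw).2
  have hdiffeq : (F ∪ C) \ F = C \ F := by
    ext a
    simp only [Finset.mem_sdiff, Finset.mem_union]
    tauto
  refine ⟨F ∪ C, ?_, connectedOn_union_circuit hF hC hmeet, ?_⟩
  · exact ⟨Finset.subset_union_left, fun hsup => hwF (hsup (Finset.mem_union_right _ hwC))⟩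
  · rw [hdiffeq]
    refine ⟨⟨w, hw⟩, (Finset.sdiff_subset).trans Finset.subset_union_right, ?_⟩
    intro D hD hDsub hDmeet
    obtain ⟨x, hxD, hxCF⟩ := hDmeet
    by_cases hDF : ∃ z ∈ D, z ∈ F
    · have hDT : D ∈ T := by
        refine Finset.mem_filter.mpr ⟨Finset.mem_powerset.mpr (Finset.subset_univ D),
          hD, hDF, ⟨x, Finset.mem_sdiff.mpr ⟨hxD, (Finset.mem_sdiff.mp hxCF).2⟩⟩⟩
      have hmin := hCmin D hDT
      have hsub : D \ F ⊆ C \ F := by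
        intro a ha
        rw [Finset.mem_sdiff] at ha ⊢
        rcases Finset.mem_union.mp (hDsub ha.1) with h' | h'
        · exact absurd h' ha.2
        · exact ⟨h', ha.2⟩
      have heq : D \ F = C \ F := Finset.eq_of_subset_of_card_le hsub hmin
      intro a ha
      have : a ∈ D \ F := heq ▸ ha
      exact (Finset.mem_sdiff.mp this).1
    · push_neg at hDF
      have hDC : D ⊆ C := by
        intro a ha
        rcases Finset.mem_union.mp (hDsub ha) with h' | h'
        · exact absurd h' (hDF a ha)
        · exact h'
      have hDC' : D = C := circuit_eq_of_subset hC hD hDC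
      obtain ⟨z, hz, hzF⟩ := hmeet
      exact absurd hzF (hDF z (hDC' ▸ hz))

lemma circuit_connectedOn {C : Finset E} (hC : M.IsCircuit C) : M.ConnectedOn C :=
  ⟨circuit_nonempty hC, fun e he f hf _ => ⟨C, hC, Finset.Subset.refl C, he, hf⟩⟩

lemma main_aux (hconn : M.Connected) : ∀ (n : ℕ) (F0 : Finset E),
    (Finset.univ \ F0).card ≤ n → M.ConnectedOn F0 →
    ∃ (k : ℕ) (F : ℕ → Finset E),
      1 ≤ k ∧ F 1 = F0 ∧ F k = Finset.univ ∧
      (∀ i, 1 ≤ i → i < k → F i ⊂ F (i + 1)) ∧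
      (∀ i, 1 ≤ i → i ≤ k → M.ConnectedOn (F i)) ∧
      (∀ i, 2 ≤ i → i ≤ k → M.HandleOn (F i) (F i \ F (i - 1))) := by
  intro n
  induction n with
  | zero =>
    intro F0 hcard hF0
    have huniv : F0 = Finset.univ := by
      refine Finset.eq_univ_iff_forall.mpr fun a => ?_
      by_contra ha
      have : a ∈ Finset.univ \ F0 := Finset.mem_sdiff.mpr ⟨Finset.mem_univ a, ha⟩
      have := Finset.card_pos.mpr ⟨a, this⟩
      omega
    exact ⟨1, fun _ => F0, le_refl 1, rfl, huniv, fun i h1 h2 => by omega,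
      fun i _ _ => hF0, fun i h2 h1 => by omega⟩
  | succ n ih =>
    intro F0 hcard hF0
    by_cases huniv : F0 = Finset.univ
    · exact ⟨1, fun _ => F0, le_refl 1, rfl, huniv, fun i h1 h2 => by omega,
        fun i _ _ => hF0, fun i h2 h1 => by omega⟩
    · obtain ⟨F', hsub, hF', hH⟩ := exists_step hconn hF0 huniv
      have hcard' : (Finset.univ \ F').card ≤ n := by
        have hssub : Finset.univ \ F' ⊂ Finset.univ \ F0 := by
          obtain ⟨b, hbF', hbF0⟩ := Finset.exists_of_ssubset hsub
          refine ⟨fun a ha => ?_, fun hsup => ?_⟩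
          · rw [Finset.mem_sdiff] at ha ⊢
            exact ⟨ha.1, fun h => ha.2 (hsub.subset h)⟩
          · have : b ∈ Finset.univ \ F' :=
              hsup (Finset.mem_sdiff.mpr ⟨Finset.mem_univ b, hbF0⟩)
            exact (Finset.mem_sdiff.mp this).2 hbF'
        have := Finset.card_lt_card hssub
        omega
      obtain ⟨k, G, hk, hG1, hGk, hchain, hconn', hhandle⟩ := ih F' hcard' hF'
      refine ⟨k + 1, fun i => if i ≤ 1 then F0 else G (i - 1), by omega, by simp, ?_, ?_, ?_, ?_⟩
      · have hk1 : ¬ (k + 1 ≤ 1) := by omega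
        simp only [if_neg hk1, Nat.add_sub_cancel]
        exact hGk
      · intro i h1 h2
        by_cases hi : i = 1
        · subst hi
          simp only [le_refl, if_pos, if_neg (by omega : ¬ (1 + 1 ≤ 1))]
          rw [show (1 + 1 - 1 : ℕ) = 1 from rfl, hG1]
          exact hsub
        · have h2' : 2 ≤ i := by omega
          simp only [if_neg (by omega : ¬ (i ≤ 1)), if_neg (by omega : ¬ (i + 1 ≤ 1))]
          have e1 : i + 1 - 1 = (i - 1) + 1 := by omega
          rw [e1]
          exact hchain (i - 1) (by omega) (by omega)
      · intro i h1 h2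
        by_cases hi : i = 1
        · subst hi
          simp only [le_refl, if_pos]
          exact hF0
        · simp only [if_neg (by omega : ¬ (i ≤ 1))]
          exact hconn' (i - 1) (by omega) (by omega)
      · intro i h2 h2k
        by_cases hi : i = 2
        · subst hi
          simp only [if_neg (by omega : ¬ (2 ≤ 1)), if_pos (by omega : (2 - 1 : ℕ) ≤ 1)]
          rw [show (2 - 1 : ℕ) = 1 from rfl, hG1]
          exact hH
        · have h3 : 3 ≤ i := by omega
          simp only [if_neg (by omega : ¬ (i ≤ 1)), if_neg (by omega : ¬ (i - 1 ≤ 1))]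
          exact hhandle (i - 1) (by omega) (by omega)

/-- **Theorem (Existence of handle decompositions).**
Let `M` be a connected matroid on a finite set `E` and let `C₁` be a circuit of `M`.
Then `M` admits a handle decomposition starting with `C₁`: a chain
`C₁ = F₁ ⊊ F₂ ⊊ ⋯ ⊊ F_k = E` such that each restriction `M|_{F i}` is connected and
`F i ∖ F (i−1)` is a handle of `M|_{F i}` for `i = 2, …, k`. -/
theorem exists_handle_decomposition
    (M : FinMatroid E) (hconn : M.Connected) (C₁ : Finset E) (hC : M.IsCircuit C₁) :
    ∃ (k : ℕ) (F : ℕ → Finset E),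
      1 ≤ k ∧ F 1 = C₁ ∧ F k = Finset.univ ∧
      (∀ i, 1 ≤ i → i < k → F i ⊂ F (i + 1)) ∧
      (∀ i, 1 ≤ i → i ≤ k → M.ConnectedOn (F i)) ∧
      (∀ i, 2 ≤ i → i ≤ k → M.HandleOn (F i) (F i \ F (i - 1))) :=
  main_aux hconn (Finset.univ \ C₁).card C₁ le_rfl (circuit_connectedOn hC)

end FinMatroid
end

section
/- Let K be a field and W ⊆ K^E a realization of a matroid M whose ground set E is itself a circuit, with rk M = |E| − 1 ≥ 2. Then the radical of the Jacobian ideal J_W equals the intersection of the ideals ⟨x_e, x_f, x_g⟩ over all 3-element subsets {e,f,g} ⊆ E; that is, the reduced Jacobian scheme Σ_W^red is the union of all codimension-3 coordinate subspaces of K^E. -/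
open scoped BigOperators

namespace Config

variable {K : Type} [Field K] {E : Type} [Fintype E] [DecidableEq E]

def IsCircuit (W : Submodule K (E → K)) (C : Finset E) : Prop :=
  ¬ Indep W C ∧ ∀ D ⊂ C, Indep W D

/-! ### Auxiliary development -/

open MvPolynomial Finset

variable {r : ℕ}

/-- A chosen enumeration of `univ.erase e` by `Fin r`. -/
noncomputable def embE (hcard : Fintype.card E = r + 1) (e : E) : Fin r ≃ {x // x ∈ Finset.univ.erase e} :=
  (Fintype.equivFinOfCardEq (by
    rw [Fintype.card_coe, Finset.card_erase_of_mem (Finset.mem_univ e),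
      Finset.card_univ, hcard]; rfl)).symm

noncomputable def embF (hcard : Fintype.card E = r + 1) (e : E) : Fin r → E :=
  fun i => ((embE hcard e i : {x // x ∈ Finset.univ.erase e}) : E)

lemma embF_injective (hcard : Fintype.card E = r + 1) (e : E) :
    Function.Injective (embF hcard e) :=
  Subtype.val_injective.comp (embE hcard e).injective

lemma embF_mem (hcard : Fintype.card E = r + 1) (e : E) (i : Fin r) :
    embF hcard e i ∈ Finset.univ.erase e := (embE hcard e i).2

lemma embF_ne (hcard : Fintype.card E = r + 1) (e : E) (i : Fin r) :
    embF hcard e i ≠ e := Finset.ne_of_mem_erase (embF_mem hcard e i)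

lemma embF_surj (hcard : Fintype.card E = r + 1) (e : E) {s : E}
    (hs : s ∈ Finset.univ.erase e) : ∃ i, embF hcard e i = s := by
  obtain ⟨i, hi⟩ := (embE hcard e).surjective ⟨s, hs⟩
  exact ⟨i, by simp [embF, hi]⟩

lemma prod_embF {M : Type*} [CommMonoid M] (hcard : Fintype.card E = r + 1) (e : E)
    (g : E → M) : (∏ i : Fin r, g (embF hcard e i)) = ∏ f ∈ Finset.univ.erase e, g f := by
  rw [← Finset.prod_coe_sort (Finset.univ.erase e) g]
  exact Equiv.prod_comp (embE hcard e) (fun s => g s)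

/-- The basic `K`-determinant attached to `e`. -/
noncomputable def cdet (w : Fin r → E → K) (hcard : Fintype.card E = r + 1) (e : E) : K :=
  Matrix.det (Matrix.of fun i j => w j (embF hcard e i))

/-- configuration polynomial of a circuit: explicit expansion. -/
lemma psi_circuit (w : Fin r → E → K) (hcard : Fintype.card E = r + 1) :
    psi w = ∑ e : E, C ((cdet w hcard e) ^ 2) * ∏ f ∈ Finset.univ.erase e, X f := by
  classical
  -- the rows of `Qform w` as sums of scaled constant vectors
  have hrow : ∀ i, (Qform w) i = ∑ e : E,
      (C (w i e) * X e) • (fun j => (C (w j e) : MvPolynomial E K)) := by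
    intro i
    funext j
    simp only [Qform, Matrix.of_apply, Finset.sum_apply, Pi.smul_apply, smul_eq_mul]
    refine Finset.sum_congr rfl fun e _ => ?_
    rw [C_mul]; ring
  set D : (Fin r → E) → MvPolynomial E K :=
    fun f => Matrix.det (Matrix.of fun i j => (C (w j (f i)) : MvPolynomial E K)) with hD
  have hexp : psi w = ∑ f : Fin r → E,
      (∏ i, (C (w i (f i)) * X (f i))) * D f := by
    have h0 : psi w = Matrix.detRowAlternating
        (fun i => ∑ e : E, (C (w i e) * X e) •
          (fun j => (C (w j e) : MvPolynomial E K))) := by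
      rw [psi]
      congr 1
      funext i
      exact hrow i
    rw [h0]
    rw [show (Matrix.detRowAlternating
        (fun i => ∑ e : E, (C (w i e) * X e) •
          (fun j => (C (w j e) : MvPolynomial E K)))) =
        (Matrix.detRowAlternating.toMultilinearMap
          (fun i => ∑ e : E, (C (w i e) * X e) •
            (fun j => (C (w j e) : MvPolynomial E K)))) from rfl]
    rw [MultilinearMap.map_sum]
    refine Finset.sum_congr rfl fun f _ => ?_
    rw [show (fun i => (C (w i (f i)) * X (f i)) •
        (fun j => (C (w j (f i)) : MvPolynomial E K))) =
        (fun i => (C (w i (f i)) * X (f i)) •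
        ((Matrix.of fun i j => (C (w j (f i)) : MvPolynomial E K)) i)) from rfl]
    refine (Matrix.detRowAlternating.toMultilinearMap.map_smul_univ _ (Matrix.of fun i j => (C (w j (f i)) : MvPolynomial E K))).trans ?_
    rfl
  -- terms with non-injective f vanish
  have hsplit : psi w = ∑ f ∈ Finset.univ.filter (fun f : Fin r → E => Function.Injective f),
      (∏ i, (C (w i (f i)) * X (f i))) * D f := by
    rw [hexp, ← Finset.sum_filter_add_sum_filter_not Finset.univ
      (fun f : Fin r → E => Function.Injective f)]
    rw [add_eq_left]
    refine Finset.sum_eq_zero fun f hf => ?_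
    rw [Finset.mem_filter] at hf
    obtain ⟨a, b, hab, hne⟩ := Function.not_injective_iff.mp hf.2
    have hz : D f = 0 := by
      refine Matrix.det_zero_of_row_eq hne ?_
      funext j
      simp [hab]
    rw [hz, mul_zero]
  -- reparametrize injective maps by pairs (e, σ)
  have hbij : ∑ f ∈ Finset.univ.filter (fun f : Fin r → E => Function.Injective f),
      (∏ i, (C (w i (f i)) * X (f i))) * D f =
      ∑ p : E × Equiv.Perm (Fin r),
        (∏ i, (C (w i (embF hcard p.1 (p.2 i))) * X (embF hcard p.1 (p.2 i)))) *
          D (embF hcard p.1 ∘ p.2) := by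
    refine (Finset.sum_bij (fun p _ => embF hcard p.1 ∘ p.2) ?_ ?_ ?_ ?_).symm
    · intro p _
      exact Finset.mem_filter.mpr ⟨Finset.mem_univ _,
        (embF_injective hcard p.1).comp p.2.injective⟩
    · intro p _ q _ h
      have he : p.1 = q.1 := by
        by_contra hne
        have h1 : p.1 ∈ Finset.univ.erase q.1 := Finset.mem_erase.mpr ⟨hne, Finset.mem_univ _⟩
        obtain ⟨i, hi⟩ := embF_surj hcard q.1 h1
        have := congrFun h (q.2.symm i)
        simp only [Function.comp_apply, Equiv.apply_symm_apply] at this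
        rw [hi] at this
        exact embF_ne hcard p.1 _ this
      refine Prod.ext he (Equiv.ext fun i => ?_)
      have := congrFun h i
      simp only [Function.comp_apply, he] at this
      exact embF_injective hcard q.1 this
    · intro f hf
      have hinj : Function.Injective f := (Finset.mem_filter.mp hf).2
      have hcardim : (Finset.univ.image f).card = r := by
        rw [Finset.card_image_of_injective _ hinj, Finset.card_univ, Fintype.card_fin]
      have hcompl : (Finset.univ \ Finset.univ.image f).card = 1 := by
        rw [Finset.card_sdiff_of_subset (Finset.subset_univ _), Finset.card_univ, hcard, hcardim]
        omega
      obtain ⟨e, he⟩ := Finset.card_eq_one.mp hcompl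
      have hemem : e ∉ Finset.univ.image f := by
        have : e ∈ Finset.univ \ Finset.univ.image f := he ▸ Finset.mem_singleton_self e
        exact (Finset.mem_sdiff.mp this).2
      have hfne : ∀ i, f i ≠ e := by
        intro i hie
        exact hemem (Finset.mem_image.mpr ⟨i, Finset.mem_univ i, hie⟩)
      set g : Fin r → Fin r := fun i => (embE hcard e).symm
        ⟨f i, Finset.mem_erase.mpr ⟨hfne i, Finset.mem_univ _⟩⟩ with hg
      have hginj : Function.Injective g := by
        intro a b hab
        have := (embE hcard e).symm.injective hab
        exact hinj (congrArg Subtype.val this)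
      have hgbij := (Finite.injective_iff_bijective).mp hginj
      refine ⟨⟨e, Equiv.ofBijective g hgbij⟩, Finset.mem_univ _, ?_⟩
      funext i
      simp only [Function.comp_apply, Equiv.ofBijective_apply, hg, embF,
        Equiv.apply_symm_apply]
    · intro p _
      rfl
  rw [hsplit, hbij, Fintype.sum_prod_type]
  refine Finset.sum_congr rfl fun e _ => ?_
  -- now compute the inner sum over permutations
  have hM : ∀ σ : Equiv.Perm (Fin r), D (embF hcard e ∘ σ) =
      (Equiv.Perm.sign σ : ℤ) * D (embF hcard e) := by
    intro σ
    exact Matrix.det_permute σ (Matrix.of fun i j => (C (w j (embF hcard e i)) : MvPolynomial E K))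
  have hprodX : ∀ σ : Equiv.Perm (Fin r),
      (∏ i, (X (embF hcard e (σ i)) : MvPolynomial E K)) =
        ∏ f ∈ Finset.univ.erase e, X f := by
    intro σ
    rw [Equiv.prod_comp σ (fun i => (X (embF hcard e i) : MvPolynomial E K))]
    exact prod_embF hcard e _
  calc ∑ σ : Equiv.Perm (Fin r),
        (∏ i, (C (w i (embF hcard e (σ i))) * X (embF hcard e (σ i)))) *
          D (embF hcard e ∘ σ)
      = ∑ σ : Equiv.Perm (Fin r),
        (((Equiv.Perm.sign σ : ℤ) : MvPolynomial E K) * ∏ i, (C (w i (embF hcard e (σ i))) : MvPolynomial E K)) *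
          (D (embF hcard e) * ∏ f ∈ Finset.univ.erase e, X f) := by
        refine Finset.sum_congr rfl fun σ _ => ?_
        rw [Finset.prod_mul_distrib, hM σ, hprodX σ]
        ring
    _ = (∑ σ : Equiv.Perm (Fin r),
        (((Equiv.Perm.sign σ : ℤ) : MvPolynomial E K) * ∏ i, (C (w i (embF hcard e (σ i))) : MvPolynomial E K))) *
          (D (embF hcard e) * ∏ f ∈ Finset.univ.erase e, X f) := by
        rw [Finset.sum_mul]
    _ = D (embF hcard e) * (D (embF hcard e) * ∏ f ∈ Finset.univ.erase e, X f) := by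
        congr 1
        rw [hD]
        show _ = (Matrix.of fun i j => (C (w j (embF hcard e i)) : MvPolynomial E K)).det
        rw [Matrix.det_apply']
        rfl
    _ = C ((cdet w hcard e) ^ 2) * ∏ f ∈ Finset.univ.erase e, X f := by
        have hC : D (embF hcard e) = C (cdet w hcard e) := by
          rw [hD, cdet]
          exact (RingHom.map_det (C : K →+* MvPolynomial E K) _).symm
        rw [hC, ← mul_assoc, ← C_mul, ← pow_two]

lemma cdet_ne_zero {W : Submodule K (E → K)} {w : Fin r → E → K}
    (hw : IsBasisOf w W) (hcard : Fintype.card E = r + 1)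
    (hcirc : IsCircuit W Finset.univ) (e : E) : cdet w hcard e ≠ 0 := by
  have hindep : Indep W (Finset.univ.erase e) :=
    hcirc.2 _ (Finset.erase_ssubset (Finset.mem_univ e))
  have hmem : ∀ j, w j ∈ W := fun j => hw.2 ▸ Submodule.subset_span (Set.mem_range_self j)
  set w' : Fin r → W := fun j => ⟨w j, hmem j⟩ with hw'
  let Φ : (W →ₗ[K] K) →ₗ[K] (Fin r → K) := LinearMap.pi fun j => LinearMap.applyₗ (w' j)
  have hker : LinearMap.ker Φ = ⊥ := by
    rw [LinearMap.ker_eq_bot']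
    intro ξ hξ
    have hspan : Submodule.span K (Set.range w') = ⊤ := by
      apply Submodule.map_injective_of_injective W.injective_subtype
      rw [Submodule.map_span, ← Set.range_comp]
      have hcomp : (W.subtype ∘ w') = w := rfl
      rw [hcomp, hw.2, Submodule.map_top, Submodule.range_subtype]
    exact LinearMap.ext_on_range hspan (fun j => congrFun hξ j)
  have h1 : LinearIndependent K
      (fun s : {x // x ∈ Finset.univ.erase e} => Φ (coordFun W s)) :=
    hindep.map' Φ hker
  have h2 : LinearIndependent K
      ((fun s : {x // x ∈ Finset.univ.erase e} => Φ (coordFun W s)) ∘ (embE hcard e)) :=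
    (linearIndependent_equiv (embE hcard e)).mpr h1
  have h3 : LinearIndependent K
      (fun i => (Matrix.of fun i j => w j (embF hcard e i)) i) := h2
  have h4 : IsUnit (Matrix.of fun i j => w j (embF hcard e i)) :=
    Matrix.linearIndependent_rows_iff_isUnit.mp h3
  exact (Matrix.isUnit_iff_isUnit_det _ |>.mp h4).ne_zero

lemma pderiv_prodX (h : E) (S : Finset E) :
    pderiv h (∏ f ∈ S, (X f : MvPolynomial E K)) =
      if h ∈ S then ∏ f ∈ S.erase h, X f else 0 := by
  induction S using Finset.induction_on with
  | empty => simp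
  | @insert a S ha ih =>
    rw [Finset.prod_insert ha, pderiv_mul, ih, pderiv_X]
    by_cases hha : h = a
    · subst hha
      simp [Finset.erase_insert ha, ha]
    · rw [Pi.single_apply]
      simp only [if_neg (Ne.symm hha), Finset.mem_insert, hha, false_or]
      by_cases hS : h ∈ S
      · rw [if_pos hS, if_pos hS, Finset.erase_insert_of_ne (Ne.symm ?_), Finset.prod_insert]
        · ring
        · exact fun hc => ha (Finset.mem_of_mem_erase hc)
        · exact fun hc => hha (by exact hc.symm ▸ rfl)
      · simp [hS]


lemma pderiv_psi_s19 (w : Fin r → E → K) (hcard : Fintype.card E = r + 1) (h : E) :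
    pderiv h (psi w) = ∑ e ∈ Finset.univ.erase h,
      C ((cdet w hcard e) ^ 2) * ∏ f ∈ (Finset.univ.erase e).erase h, X f := by
  rw [psi_circuit w hcard, map_sum]
  have key : ∀ e : E, pderiv h (C ((cdet w hcard e) ^ 2) * ∏ f ∈ Finset.univ.erase e, X f)
      = if e ∈ Finset.univ.erase h then
          C ((cdet w hcard e) ^ 2) * ∏ f ∈ (Finset.univ.erase e).erase h, X f else 0 := by
    intro e
    rw [pderiv_C_mul, pderiv_prodX]
    by_cases hhe : h ∈ Finset.univ.erase e
    · rw [if_pos hhe, if_pos]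
      exact Finset.mem_erase.mpr ⟨fun hc => (Finset.mem_erase.mp hhe).1 hc.symm, Finset.mem_univ _⟩
    · rw [if_neg hhe, if_neg, mul_zero]
      intro hc
      exact hhe (Finset.mem_erase.mpr ⟨fun hc2 => (Finset.mem_erase.mp hc).1 hc2.symm,
        Finset.mem_univ _⟩)
  calc (∑ e : E, pderiv h (C ((cdet w hcard e) ^ 2) * ∏ f ∈ Finset.univ.erase e, X f))
      = ∑ e : E, (if e ∈ Finset.univ.erase h then
          C ((cdet w hcard e) ^ 2) * ∏ f ∈ (Finset.univ.erase e).erase h, X f else 0) :=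
        Finset.sum_congr rfl fun e _ => key e
    _ = _ := by rw [Finset.sum_ite_mem, Finset.univ_inter]

lemma psi_mem (w : Fin r → E → K) : psi w ∈ jacIdeal w :=
  Ideal.subset_span (Set.mem_union_left _ rfl)

lemma pderiv_psi_mem (w : Fin r → E → K) (e : E) : pderiv e (psi w) ∈ jacIdeal w :=
  Ideal.subset_span (Set.mem_union_right _ ⟨e, rfl⟩)

lemma isUnit_Ccdet {W : Submodule K (E → K)} {w : Fin r → E → K}
    (hw : IsBasisOf w W) (hcard : Fintype.card E = r + 1)
    (hcirc : IsCircuit W Finset.univ) (e : E) :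
    IsUnit (C ((cdet w hcard e) ^ 2) : MvPolynomial E K) := by
  have hne : (cdet w hcard e) ^ 2 ≠ 0 := pow_ne_zero _ (cdet_ne_zero hw hcard hcirc e)
  exact IsUnit.of_mul_eq_one (C ((cdet w hcard e) ^ 2)⁻¹)
    (by rw [← C_mul, mul_inv_cancel₀ hne, C_1])

lemma Me_mem {W : Submodule K (E → K)} {w : Fin r → E → K}
    (hw : IsBasisOf w W) (hcard : Fintype.card E = r + 1)
    (hcirc : IsCircuit W Finset.univ) (e : E) :
    (∏ f ∈ Finset.univ.erase e, X f : MvPolynomial E K) ∈ jacIdeal w := by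
  have key : C ((cdet w hcard e) ^ 2) * (∏ f ∈ Finset.univ.erase e, X f : MvPolynomial E K)
      = psi w - X e * pderiv e (psi w) := by
    rw [pderiv_psi_s19 w hcard e, Finset.mul_sum, psi_circuit w hcard]
    rw [← Finset.add_sum_erase (Finset.univ) _ (Finset.mem_univ e)]
    rw [add_sub_assoc]
    rw [show (∑ f ∈ Finset.univ.erase e, C ((cdet w hcard f) ^ 2) * ∏ g ∈ Finset.univ.erase f, X g)
        - (∑ f ∈ Finset.univ.erase e, X e * (C ((cdet w hcard f) ^ 2)
            * ∏ g ∈ (Finset.univ.erase f).erase e, X g)) = 0 from ?_, add_zero]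
    rw [sub_eq_zero]
    refine Finset.sum_congr rfl fun f hf => ?_
    have hef : e ∈ Finset.univ.erase f := Finset.mem_erase.mpr
      ⟨fun hc => (Finset.mem_erase.mp hf).1 hc.symm, Finset.mem_univ _⟩
    rw [← Finset.mul_prod_erase _ _ hef]
    ring
  have hmem : C ((cdet w hcard e) ^ 2) * (∏ f ∈ Finset.univ.erase e, X f : MvPolynomial E K)
      ∈ jacIdeal w := by
    rw [key]
    exact Ideal.sub_mem _ (psi_mem w) (Ideal.mul_mem_left _ _ (pderiv_psi_mem w e))
  have hu := isUnit_Ccdet hw hcard hcirc e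
  obtain ⟨v, hv⟩ := hu
  have : (∏ f ∈ Finset.univ.erase e, X f : MvPolynomial E K) =
      (↑v⁻¹ : MvPolynomial E K) * (C ((cdet w hcard e) ^ 2) * ∏ f ∈ Finset.univ.erase e, X f) := by
    rw [← mul_assoc, ← hv, Units.inv_mul, one_mul]
  rw [this]
  exact Ideal.mul_mem_left _ _ hmem

lemma PP_sq_mem {W : Submodule K (E → K)} {w : Fin r → E → K}
    (hw : IsBasisOf w W) (hcard : Fintype.card E = r + 1)
    (hcirc : IsCircuit W Finset.univ) {a b : E} (hab : b ≠ a) :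
    ((∏ f ∈ (Finset.univ.erase a).erase b, X f : MvPolynomial E K)) ^ 2 ∈ jacIdeal w := by
  set P : MvPolynomial E K := ∏ f ∈ (Finset.univ.erase a).erase b, X f with hP
  have hba : b ∈ Finset.univ.erase a := Finset.mem_erase.mpr ⟨hab, Finset.mem_univ _⟩
  have key : C ((cdet w hcard b) ^ 2) * P ^ 2 =
      P * pderiv a (psi w) - ∑ e ∈ (Finset.univ.erase a).erase b,
        (C ((cdet w hcard e) ^ 2) *
          ∏ f ∈ ((Finset.univ.erase a).erase e).erase b, X f) *
            (∏ f ∈ Finset.univ.erase a, X f) := by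
    rw [pderiv_psi_s19 w hcard a, Finset.mul_sum]
    rw [← Finset.add_sum_erase _ _ hba]
    have hre : ∀ e : E, (Finset.univ.erase e).erase a = (Finset.univ.erase a).erase e :=
      fun e => Finset.erase_right_comm
    rw [hre b]
    have hterm : ∀ e ∈ (Finset.univ.erase a).erase b,
        P * (C ((cdet w hcard e) ^ 2) * ∏ f ∈ (Finset.univ.erase e).erase a, X f) =
        (C ((cdet w hcard e) ^ 2) *
          ∏ f ∈ ((Finset.univ.erase a).erase e).erase b, X f) *
            (∏ f ∈ Finset.univ.erase a, X f) := by
      intro e he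
      rw [hre e]
      have hbmem : b ∈ (Finset.univ.erase a).erase e := Finset.mem_erase.mpr
        ⟨fun hc => (Finset.mem_erase.mp he).1 hc.symm, hba⟩
      rw [← Finset.mul_prod_erase _ _ hbmem]
      rw [hP, ← Finset.mul_prod_erase _ _ hba]
      ring
    rw [Finset.sum_congr rfl hterm]
    ring
  have hmem2 : C ((cdet w hcard b) ^ 2) * P ^ 2 ∈ jacIdeal w := by
    rw [key]
    refine Ideal.sub_mem _ (Ideal.mul_mem_left _ _ (pderiv_psi_mem w a)) ?_
    exact Ideal.sum_mem _ fun e _ => Ideal.mul_mem_left _ _ (Me_mem hw hcard hcirc a)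
  obtain ⟨v, hv⟩ := isUnit_Ccdet hw hcard hcirc b
  have : P ^ 2 = (↑v⁻¹ : MvPolynomial E K) * (C ((cdet w hcard b) ^ 2) * P ^ 2) := by
    rw [← mul_assoc, ← hv, Units.inv_mul, one_mul]
  rw [this]
  exact Ideal.mul_mem_left _ _ hmem2


/-! ### Ideals generated by variables -/

/-- The substitution killing the variables in `T`. -/
noncomputable def killT (T : Finset E) : MvPolynomial E K →ₐ[K] MvPolynomial E K :=
  aeval (fun e => if e ∈ T then 0 else X e)

lemma sub_killT_mem (T : Finset E) (p : MvPolynomial E K) :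
    p - killT T p ∈ Ideal.span ((fun e => (X e : MvPolynomial E K)) '' (T : Set E)) := by
  induction p using MvPolynomial.induction_on with
  | C a => simp [killT, Ideal.zero_mem]
  | add p q hp hq =>
    rw [map_add]
    have : p + q - (killT T p + killT T q) = (p - killT T p) + (q - killT T q) := by ring
    rw [this]
    exact Ideal.add_mem _ hp hq
  | mul_X p e hp =>
    have hXe : killT (K := K) T (X e) = if e ∈ T then 0 else X e := aeval_X _ e
    rw [map_mul, hXe]
    by_cases he : e ∈ T
    · rw [if_pos he, mul_zero, sub_zero]
      exact Ideal.mul_mem_left _ _ (Ideal.subset_span ⟨e, he, rfl⟩)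
    · rw [if_neg he]
      have : p * X e - (killT T) p * X e = (p - killT T p) * X e := by ring
      rw [this]
      exact Ideal.mul_mem_right _ _ hp

lemma spanX_eq_ker (T : Finset E) :
    Ideal.span ((fun e => (X e : MvPolynomial E K)) '' (T : Set E)) =
      RingHom.ker (killT (K := K) T).toRingHom := by
  apply le_antisymm
  · rw [Ideal.span_le]
    rintro _ ⟨e, he, rfl⟩
    simp only [SetLike.mem_coe, RingHom.mem_ker, AlgHom.toRingHom_eq_coe, RingHom.coe_coe]
    simp [killT, Finset.mem_coe.mp he]
  · intro p hp
    have h0 : killT (K := K) T p = 0 := hp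
    have := sub_killT_mem T p
    rwa [h0, sub_zero] at this

lemma spanX_isPrime (T : Finset E) :
    (Ideal.span ((fun e => (X e : MvPolynomial E K)) '' (T : Set E))).IsPrime := by
  rw [spanX_eq_ker]
  exact RingHom.ker_isPrime _

lemma touch_of_mem_spanX {T : Finset E} {p : MvPolynomial E K}
    (hp : p ∈ Ideal.span ((fun e => (X e : MvPolynomial E K)) '' (T : Set E))) :
    ∀ m ∈ p.support, ∃ e ∈ T, m e ≠ 0 := by
  refine Submodule.span_induction ?_ ?_ ?_ ?_ hp
  · rintro _ ⟨e, he, rfl⟩ m hm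
    rw [MvPolynomial.support_X] at hm
    rw [Finset.mem_singleton] at hm
    exact ⟨e, he, by simp [hm]⟩
  · intro m hm
    simp at hm
  · intro p q _ _ hp hq m hm
    rcases Finset.mem_union.mp (MvPolynomial.support_add hm) with h | h
    · exact hp m h
    · exact hq m h
  · intro a p _ hp m hm
    rw [smul_eq_mul] at hm
    obtain ⟨m₁, hm₁, m₂, hm₂, rfl⟩ := Finset.mem_add.mp (MvPolynomial.support_mul _ _ hm)
    obtain ⟨e, he, hne⟩ := hp m₂ hm₂
    exact ⟨e, he, by simp [Finsupp.add_apply]; omega⟩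


/-- **Theorem (Generic points for circuits).**
Let `W ⊆ K^E` realize a matroid whose ground set `E` is a circuit, of rank
`|E| − 1 ≥ 2`.  Then the radical of the Jacobian ideal `J_W` is the intersection of
the ideals `⟨x_e, x_f, x_g⟩` over all `3`-element subsets of `E`: the reduced Jacobian
scheme is the union of all codimension-`3` coordinate subspaces of `K^E`. -/
theorem jacIdeal_radical_of_circuit
    (W : Submodule K (E → K)) {r : ℕ} (w : Fin r → E → K)
    (hw : IsBasisOf w W) (hcirc : IsCircuit W Finset.univ)
    (hcard : Fintype.card E = r + 1) (hrk : 2 ≤ r) :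
    (jacIdeal w).radical =
      ⨅ T ∈ (Finset.univ.powersetCard 3 : Finset (Finset E)),
        Ideal.span ((fun e => (MvPolynomial.X e : MvPolynomial E K)) '' (T : Set E)) := by
  classical
  apply le_antisymm
  · refine le_iInf fun T => le_iInf fun hT => ?_
    have hT3 : T.card = 3 := (Finset.mem_powersetCard.mp hT).2
    set I := Ideal.span ((fun e => (X e : MvPolynomial E K)) '' (T : Set E)) with hI
    have hprodmem : ∀ (S : Finset E) (t : E), t ∈ S → t ∈ T →
        (∏ f ∈ S, X f : MvPolynomial E K) ∈ I := by
      intro S t htS htT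
      rw [← Finset.mul_prod_erase _ _ htS]
      exact Ideal.mul_mem_right _ _ (Ideal.subset_span ⟨t, htT, rfl⟩)
    have hJle : jacIdeal w ≤ I := by
      rw [jacIdeal, Ideal.span_le]
      rintro q hq
      rcases hq with hq | ⟨h, rfl⟩
      · rw [Set.mem_singleton_iff] at hq
        subst hq
        rw [psi_circuit w hcard]
        refine Ideal.sum_mem _ fun e _ => Ideal.mul_mem_left _ _ ?_
        obtain ⟨t, htT, hte⟩ := Finset.exists_mem_ne (s := T) (by omega) e
        exact hprodmem _ t (Finset.mem_erase.mpr ⟨hte, Finset.mem_univ _⟩) htT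
      · show (pderiv h) (psi w) ∈ I
        rw [pderiv_psi_s19 w hcard h]
        refine Ideal.sum_mem _ fun e _ => Ideal.mul_mem_left _ _ ?_
        have hexists : ∃ t ∈ T, t ≠ e ∧ t ≠ h := by
          by_contra hc
          push_neg at hc
          have hsub : T ⊆ {e, h} := by
            intro t ht
            by_cases h2 : t = e
            · exact Finset.mem_insert.mpr (Or.inl h2)
            · exact Finset.mem_insert.mpr (Or.inr (by simp [hc t ht h2]))
          have h2 : ({e, h} : Finset E).card ≤ 2 :=
            (Finset.card_insert_le e {h}).trans (by simp)
          have := Finset.card_le_card hsub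
          omega
        obtain ⟨t, htT, hte, hth⟩ := hexists
        exact hprodmem _ t (Finset.mem_erase.mpr ⟨hth,
          Finset.mem_erase.mpr ⟨hte, Finset.mem_univ _⟩⟩) htT
    calc (jacIdeal w).radical ≤ I.radical := Ideal.radical_mono hJle
      _ = I := (spanX_isPrime T).radical
  · intro p hp
    have hptouch : ∀ T ∈ (Finset.univ.powersetCard 3 : Finset (Finset E)),
        ∀ m ∈ p.support, ∃ e ∈ T, m e ≠ 0 := by
      intro T hT
      refine touch_of_mem_spanX ?_
      have h1 := (Submodule.mem_iInf _).mp hp T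
      exact (Submodule.mem_iInf _).mp h1 hT
    rw [MvPolynomial.as_sum p]
    refine Ideal.sum_mem _ fun m hm => ?_
    have hcompl : (Finset.univ \ m.support).card ≤ 2 := by
      by_contra hc
      push_neg at hc
      obtain ⟨T, hTsub, hT3⟩ := Finset.exists_subset_card_eq (s := Finset.univ \ m.support) (n := 3) (by omega)
      have hTmem : T ∈ (Finset.univ.powersetCard 3 : Finset (Finset E)) :=
        Finset.mem_powersetCard.mpr ⟨Finset.subset_univ _, hT3⟩
      obtain ⟨e, heT, hne⟩ := hptouch T hTmem m hm
      have h2 : e ∈ Finset.univ \ m.support := hTsub heT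
      exact hne (by simpa using (Finset.mem_sdiff.mp h2).2)
    obtain ⟨T₂, hsub2, hsubuniv, hT₂⟩ := Finset.exists_subsuperset_card_eq
      (Finset.subset_univ (Finset.univ \ m.support)) hcompl
      (by rw [Finset.card_univ, hcard]; omega)
    obtain ⟨a, b, hab, rfl⟩ := Finset.card_eq_two.mp hT₂
    have hDsub : (Finset.univ.erase a).erase b ⊆ m.support := by
      intro x hx
      by_contra hxs
      have : x ∈ Finset.univ \ m.support := Finset.mem_sdiff.mpr ⟨Finset.mem_univ _, hxs⟩
      have hx2 := hsub2 this
      rcases Finset.mem_insert.mp hx2 with h1 | h1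
      · exact (Finset.mem_erase.mp (Finset.mem_of_mem_erase hx)).1 h1
      · exact (Finset.mem_erase.mp hx).1 (Finset.mem_singleton.mp h1)
    have hPrad : (∏ f ∈ (Finset.univ.erase a).erase b, X f : MvPolynomial E K)
        ∈ (jacIdeal w).radical :=
      Ideal.mem_radical_iff.mpr ⟨2, PP_sq_mem hw hcard hcirc (Ne.symm hab)⟩
    have hdvd : (∏ f ∈ (Finset.univ.erase a).erase b, X f : MvPolynomial E K) ∣
        monomial m (coeff m p) := by
      rw [MvPolynomial.monomial_eq]
      refine Dvd.dvd.mul_left ?_ _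
      have hd1 : (∏ f ∈ (Finset.univ.erase a).erase b, X f : MvPolynomial E K) ∣
          ∏ f ∈ (Finset.univ.erase a).erase b, (X f : MvPolynomial E K) ^ m f :=
        Finset.prod_dvd_prod_of_dvd _ _ fun f hf =>
          dvd_pow_self _ (Finsupp.mem_support_iff.mp (hDsub hf))
      refine hd1.trans ?_
      refine (Finset.prod_dvd_prod_of_subset _ _ _ hDsub).trans ?_
      rw [Finsupp.prod]
    obtain ⟨q, hq⟩ := hdvd
    rw [hq]
    exact Ideal.mul_mem_right _ _ hPrad

end Config
end
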